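/- arXiv:0808.3631 — 5 statements merged into one kernel-verified Lean document; each statement's English description precedes it below -/
import Mathlib

section
/- Let E be a Polish space, let (μ_ε)_{ε>0} be a family of Borel probability measures on E, and let I be a rate function on E. Then the Laplace principle upper bound holds with rate function I — i.e., for every bounded continuous h : E → ℝ, limsup_{ε→0⁺} ε·log ∫_E exp(−h(x)/ε) μ_ε(dx) ≤ −inf_{x∈E}{h(x)+I(x)} — if and only if the large deviation upper bound holds with rate function I, i.e., for every closed set F ⊆ E, limsup_{ε→0⁺} ε·log μ_ε(F) ≤ −inf_{x∈F} I(x). -/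
open MeasureTheory Filter Set Topology
open scoped ENNReal NNReal

section Helpers

variable {E : Type*} [MeasurableSpace E] [TopologicalSpace E] [OpensMeasurableSpace E]

lemma my_exp_integrable (ν : Measure E) [IsProbabilityMeasure ν] {g : E → ℝ} (hg : Continuous g)
    {C : ℝ} (hC : ∀ x, g x ≤ C) : Integrable (fun x => Real.exp (g x)) ν :=
  (integrable_const (Real.exp C)).mono'
    ((Real.continuous_exp.comp hg).aestronglyMeasurable)
    (ae_of_all _ fun x => by
      rw [Real.norm_eq_abs, abs_of_pos (Real.exp_pos _)]
      exact Real.exp_le_exp.2 (hC x))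

lemma my_exp_integral_pos (ν : Measure E) [IsProbabilityMeasure ν] {g : E → ℝ} (hg : Continuous g)
    {C : ℝ} (hC : ∀ x, |g x| ≤ C) : Real.exp (-C) ≤ ∫ x, Real.exp (g x) ∂ν := by
  have hint : Integrable (fun x => Real.exp (g x)) ν :=
    my_exp_integrable ν hg (fun x => (abs_le.1 (hC x)).2)
  calc Real.exp (-C) = ∫ _x, Real.exp (-C) ∂ν := by simp
  _ ≤ ∫ x, Real.exp (g x) ∂ν :=
    integral_mono (integrable_const _) hint fun x =>
      Real.exp_le_exp.2 (abs_le.1 (hC x)).1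

lemma my_limsup_const_add {α : Type*} (f : Filter α) [f.NeBot] (c : ℝ) (u : α → EReal) :
    limsup (fun a => (c : EReal) + u a) f ≤ (c : EReal) + limsup u f := by
  have h := EReal.limsup_add_le (u := fun _ : α => (c : EReal)) (v := u) (f := f)
    (by left; simp [limsup_const]) (by left; simp [limsup_const])
  simp only [limsup_const] at h; exact h

lemma my_le_of_forall_le_add {x B : EReal} (h : ∀ r : ℝ, 0 < r → x ≤ (r : EReal) + B) : x ≤ B := by
  induction B with
  | bot => simpa using h 1 one_pos
  | coe b =>
    induction x with
    | bot => exact bot_le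
    | coe a =>
      have : a ≤ b := le_of_forall_pos_le_add (fun r hr => by
        have h2 := h r hr
        rw [← EReal.coe_add, EReal.coe_le_coe_iff] at h2
        linarith)
      exact_mod_cast this
    | top =>
      exact absurd (h 1 one_pos) (by rw [← EReal.coe_add]; exact (EReal.coe_lt_top _).not_ge)
  | top => exact le_top

lemma my_mul_log_le {ε t : ℝ} (hε : 0 < ε) {m : ℝ≥0∞} (hm : m ≠ ⊤) (ht : m.toReal ≤ t) :
    (ε : EReal) * ENNReal.log m ≤ ((ε * Real.log t : ℝ) : EReal) := by
  rcases eq_or_ne m 0 with rfl | hm0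
  · rw [ENNReal.log_zero, EReal.coe_mul_bot_of_pos hε]; exact bot_le
  · rw [ENNReal.log_pos_real hm0 hm, ← EReal.coe_mul, EReal.coe_le_coe_iff]
    exact mul_le_mul_of_nonneg_left (Real.log_le_log (ENNReal.toReal_pos hm0 hm) ht) hε.le

end Helpers

lemma my_key_sup {E : Type*} [MetricSpace E]
    (I : E → ℝ≥0∞) (hI : ∀ M : ℝ≥0∞, M ≠ ⊤ → IsCompact {x : E | I x ≤ M})
    {F : Set E} (hF : IsClosed F) (hne : F.Nonempty) :
    (⨅ x ∈ F, (I x : EReal)) ≤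
      ⨆ j : ℕ, ⨅ x : E, ((min (Metric.infDist x F) 1 * (j : ℝ) : ℝ) : EReal) + (I x : EReal) := by
  by_contra hcon
  push_neg at hcon
  set S := ⨆ j : ℕ, ⨅ x : E, ((min (Metric.infDist x F) 1 * (j : ℝ) : ℝ) : EReal) + (I x : EReal)
    with hS
  obtain ⟨M, hSM, hMB⟩ := EReal.exists_between_coe_real hcon
  have hM0 : (0 : ℝ) ≤ M := by
    have h0 : (0 : EReal) ≤ S := by
      refine le_iSup_of_le 0 (le_iInf fun x => ?_)
      have h1 : (0:EReal) ≤ ((min (Metric.infDist x F) 1 * ((0:ℕ) : ℝ) : ℝ) : EReal) := by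
        simp
      exact le_trans h1 (le_add_of_nonneg_right (EReal.coe_ennreal_nonneg _))
    exact_mod_cast h0.trans_lt hSM |>.le
  have hxj : ∀ j : ℕ, ∃ x : E,
      ((min (Metric.infDist x F) 1 * (j : ℝ) : ℝ) : EReal) + (I x : EReal) < (M : EReal) := by
    intro j
    have h2 : (⨅ x : E, ((min (Metric.infDist x F) 1 * (j : ℝ) : ℝ) : EReal) + (I x : EReal))
        < (M : EReal) := by
      refine lt_of_le_of_lt ?_ hSM
      rw [hS]
      exact le_iSup (fun j : ℕ => ⨅ x : E,
        ((min (Metric.infDist x F) 1 * (j : ℝ) : ℝ) : EReal) + (I x : EReal)) j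
    exact iInf_lt_iff.1 h2
  choose x hx using hxj
  have hmin0 : ∀ j : ℕ, (0:ℝ) ≤ min (Metric.infDist (x j) F) 1 * (j : ℝ) := fun j =>
    mul_nonneg (le_min Metric.infDist_nonneg zero_le_one) (Nat.cast_nonneg j)
  have hIx : ∀ j, I (x j) ≤ ENNReal.ofReal M := by
    intro j
    have h3 : (I (x j) : EReal) < (M : EReal) := by
      refine lt_of_le_of_lt ?_ (hx j)
      exact le_add_of_nonneg_left (by exact_mod_cast hmin0 j)
    rw [← EReal.coe_ennreal_le_coe_ennreal_iff, EReal.coe_ennreal_ofReal,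
      max_eq_left hM0]
    exact h3.le
  have hdj : ∀ j : ℕ, min (Metric.infDist (x j) F) 1 * (j : ℝ) < M := by
    intro j
    have h3 : ((min (Metric.infDist (x j) F) 1 * (j : ℝ) : ℝ) : EReal) < (M : EReal) := by
      refine lt_of_le_of_lt ?_ (hx j)
      exact le_add_of_nonneg_right (EReal.coe_ennreal_nonneg _)
    exact_mod_cast h3
  obtain ⟨z, hzK, φ, hφ, hz⟩ := (hI (ENNReal.ofReal M) ENNReal.ofReal_ne_top).tendsto_subseq hIx
  -- the min-distance sequence tends to 0 along the subsequence
  have hmintend : Tendsto (fun k => min (Metric.infDist (x (φ k)) F) 1) atTop (𝓝 0) := by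
    have hb : ∀ᶠ k in atTop, min (Metric.infDist (x (φ k)) F) 1 ≤ M / (φ k : ℝ) := by
      filter_upwards [eventually_ge_atTop 1] with k hk
      have hpos : (0:ℝ) < (φ k : ℝ) := by
        have : 1 ≤ φ k := le_trans hk (hφ.le_apply)
        exact_mod_cast this
      exact (le_div_iff₀ hpos).2 ((hdj (φ k)).le)
    have h0 : ∀ᶠ k in atTop, (0:ℝ) ≤ min (Metric.infDist (x (φ k)) F) 1 :=
      Eventually.of_forall fun k => le_min Metric.infDist_nonneg zero_le_one
    have htend : Tendsto (fun k => M / (φ k : ℝ)) atTop (𝓝 0) :=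
      (tendsto_const_div_atTop_nhds_zero_nat M).comp hφ.tendsto_atTop
    exact squeeze_zero' h0 hb htend
  have hmintend' : Tendsto (fun k => min (Metric.infDist (x (φ k)) F) 1) atTop
      (𝓝 (min (Metric.infDist z F) 1)) := by
    have hc : Continuous fun y : E => min (Metric.infDist y F) 1 :=
      (Metric.continuous_infDist_pt F).min continuous_const
    exact (hc.tendsto z).comp hz
  have hz0 : min (Metric.infDist z F) 1 = 0 := tendsto_nhds_unique hmintend' hmintend
  have hzF : z ∈ F := by
    rw [← hF.closure_eq]
    rw [Metric.mem_closure_iff_infDist_zero hne]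
    rcases min_eq_iff.1 hz0 with ⟨h4, _⟩ | ⟨h4, _⟩
    · exact h4
    · norm_num at h4
  have hfin : (⨅ x ∈ F, (I x : EReal)) ≤ (M : EReal) := by
    refine le_trans (iInf_le_of_le z (iInf_le_of_le hzF le_rfl)) ?_
    calc (I z : EReal) ≤ ((ENNReal.ofReal M : ℝ≥0∞) : EReal) :=
          EReal.coe_ennreal_le_coe_ennreal_iff.2 hzK
    _ ≤ (M : EReal) := by rw [EReal.coe_ennreal_ofReal, max_eq_left hM0]
  exact absurd (hfin.trans_lt hMB) (lt_irrefl _)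

lemma my_dir1 {E : Type*} [TopologicalSpace E] [PolishSpace E]
    [MeasurableSpace E] [BorelSpace E]
    (μ : ℝ → Measure E) (hμ : ∀ ε : ℝ, 0 < ε → IsProbabilityMeasure (μ ε))
    (I : E → ℝ≥0∞) (hI : ∀ M : ℝ≥0∞, M ≠ ⊤ → IsCompact {x : E | I x ≤ M})
    (HL : ∀ h : E → ℝ, Continuous h → (∃ C : ℝ, ∀ x, |h x| ≤ C) →
      Filter.limsup (fun ε : ℝ => ((ε * Real.log (∫ x, Real.exp (-(h x) / ε) ∂(μ ε)) : ℝ) : EReal))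
        (𝓝[>] (0:ℝ)) ≤ -(⨅ x : E, ((h x : EReal) + (I x : EReal))))
    {F : Set E} (hF : IsClosed F) :
    Filter.limsup (fun ε : ℝ => (ε : EReal) * ENNReal.log (μ ε F)) (𝓝[>] (0:ℝ))
      ≤ -(⨅ x ∈ F, (I x : EReal)) := by
  rcases F.eq_empty_or_nonempty with rfl | hne
  · have hev : ∀ᶠ ε : ℝ in 𝓝[>] (0:ℝ), (ε : EReal) * ENNReal.log (μ ε ∅) = (⊥ : EReal) := by
      filter_upwards [self_mem_nhdsWithin] with ε (hε : ε ∈ Ioi (0:ℝ))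
      rw [measure_empty, ENNReal.log_zero, EReal.coe_mul_bot_of_pos hε]
    rw [limsup_congr hev, limsup_const]
    exact bot_le
  · letI := TopologicalSpace.upgradeIsCompletelyMetrizable E
    set g : ℕ → E → ℝ := fun j x => min (Metric.infDist x F) 1 * (j : ℝ) with hg
    have hgc : ∀ j : ℕ, Continuous (g j) := fun j =>
      ((Metric.continuous_infDist_pt F).min continuous_const).mul continuous_const
    have hg0 : ∀ (j : ℕ) (x : E), 0 ≤ g j x := fun j x =>
      mul_nonneg (le_min Metric.infDist_nonneg zero_le_one) (Nat.cast_nonneg j)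
    have hgb : ∀ j : ℕ, ∀ x, |g j x| ≤ (j : ℝ) := by
      intro j x
      rw [abs_of_nonneg (hg0 j x)]
      calc g j x ≤ 1 * (j:ℝ) := mul_le_mul_of_nonneg_right (min_le_right _ _) (Nat.cast_nonneg j)
      _ = (j:ℝ) := one_mul _
    have hls : ∀ j : ℕ,
        Filter.limsup (fun ε : ℝ => (ε : EReal) * ENNReal.log (μ ε F)) (𝓝[>] (0:ℝ))
          ≤ -(⨅ x : E, ((g j x : EReal) + (I x : EReal))) := by
      intro j
      refine le_trans (limsup_le_limsup ?_) (HL (g j) (hgc j) ⟨j, hgb j⟩)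
      filter_upwards [self_mem_nhdsWithin] with ε (hε : ε ∈ Ioi (0:ℝ))
      haveI := hμ ε hε
      have hintle : (μ ε F).toReal ≤ ∫ x, Real.exp (-(g j x) / ε) ∂(μ ε) := by
        have h1 : (μ ε F).toReal = ∫ x, F.indicator (fun _ => (1:ℝ)) x ∂(μ ε) := by
          rw [integral_indicator_const (1:ℝ) hF.measurableSet]; simp; rfl
        rw [h1]
        refine integral_mono ((integrable_const (1:ℝ)).indicator hF.measurableSet)
          (my_exp_integrable (μ ε) ((hgc j).neg.div_const ε) (C := 0)
            (fun x => div_nonpos_iff.2 (Or.inr ⟨neg_nonpos.2 (hg0 j x), hε.le⟩)))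
          (fun x => ?_)
        by_cases hxF : x ∈ F
        · rw [Set.indicator_of_mem hxF]
          have hzero : g j x = 0 := by
            rw [hg]; simp [Metric.infDist_zero_of_mem hxF]
          simp [hzero]
        · rw [Set.indicator_of_notMem hxF]
          exact (Real.exp_pos _).le
      exact my_mul_log_le hε (measure_ne_top _ _) hintle
    set L := Filter.limsup (fun ε : ℝ => (ε : EReal) * ENNReal.log (μ ε F)) (𝓝[>] (0:ℝ)) with hL
    have h1 : ∀ j : ℕ, (⨅ x : E, ((g j x : EReal) + (I x : EReal))) ≤ -L := by
      intro j
      have h := EReal.neg_le_neg_iff.2 (hls j)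
      rwa [neg_neg] at h
    have h2 : (⨅ x ∈ F, (I x : EReal)) ≤ -L :=
      le_trans (my_key_sup I hI hF hne) (iSup_le h1)
    have h3 := EReal.neg_le_neg_iff.2 h2
    rwa [neg_neg] at h3

lemma my_per_i {E : Type*} [Nonempty E] (I : E → ℝ≥0∞) (h : E → ℝ) {s : Set E}
    {c δ : ℝ} (hs : ∀ x ∈ s, h x ≤ c + δ) :
    ((-c : ℝ) : EReal) + -(⨅ x ∈ s, (I x : EReal)) ≤
      ((δ : ℝ) : EReal) + -(⨅ x : E, ((h x : EReal) + (I x : EReal))) := by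
  set b := ⨅ x ∈ s, (I x : EReal) with hb
  rcases eq_top_or_lt_top b with hbt | hbt
  · rw [hbt]
    rw [show -(⊤ : EReal) = ⊥ from rfl, EReal.add_bot]
    exact bot_le
  · have hb0 : (0 : EReal) ≤ b := le_iInf fun x => le_iInf fun _ => EReal.coe_ennreal_nonneg _
    have hbne : b ≠ ⊥ := ne_bot_of_le_ne_bot (by simp) hb0
    lift b to ℝ using ⟨hbt.ne, hbne⟩ with r hr
    have claim : (⨅ x : E, ((h x : EReal) + (I x : EReal))) ≤ ((c + δ + r : ℝ) : EReal) := by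
      by_contra hlt
      push_neg at hlt
      obtain ⟨d, hd1, hd2⟩ := EReal.exists_between_coe_real hlt
      have hγ : (0:ℝ) < d - (c + δ + r) := sub_pos.2 (EReal.coe_lt_coe_iff.1 hd1)
      have hbd : (r : EReal) < ((r + (d - (c + δ + r)) : ℝ) : EReal) := by
        exact_mod_cast (by linarith : r < r + (d - (c + δ + r)))
      rw [hb] at hbd
      obtain ⟨x, hx⟩ := iInf_lt_iff.1 hbd
      obtain ⟨hxs, hIx⟩ := iInf_lt_iff.1 hx
      have hsum : (h x : EReal) + (I x : EReal) ≤ (d : EReal) := by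
        calc (h x : EReal) + (I x : EReal)
            ≤ ((c + δ : ℝ) : EReal) + ((r + (d - (c + δ + r)) : ℝ) : EReal) :=
              add_le_add (EReal.coe_le_coe_iff.2 (hs x hxs)) hIx.le
        _ = (d : EReal) := by rw [← EReal.coe_add]; norm_cast; ring
      exact absurd ((iInf_le _ x).trans hsum) (not_le.2 hd2)
    have hneg : ((-(c + δ + r) : ℝ) : EReal) ≤ -(⨅ x : E, ((h x : EReal) + (I x : EReal))) := by
      have h5 := EReal.neg_le_neg_iff.2 claim
      rwa [← EReal.coe_neg] at h5
    calc ((-c : ℝ) : EReal) + -(r : EReal) = ((-c + -r : ℝ) : EReal) := by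
          rw [← EReal.coe_neg, ← EReal.coe_add]
    _ = ((δ : ℝ) : EReal) + ((-(c + δ + r) : ℝ) : EReal) := by
          rw [← EReal.coe_add]; norm_cast; ring
    _ ≤ _ := add_le_add le_rfl hneg

lemma my_cover {C t : ℝ} (hC : 0 < C) (htl : -C ≤ t) (htu : t ≤ C) {N : ℕ} (hN : 0 < N) :
    ∃ i : ℕ, i < N ∧ -C + 2*C/N * i ≤ t ∧ t ≤ -C + 2*C/N * (i+1) := by
  have hN' : (0:ℝ) < N := by exact_mod_cast hN
  set s : ℝ := (t + C) * N / (2*C) with hs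
  have hs0 : 0 ≤ s := div_nonneg (mul_nonneg (by linarith) hN'.le) (by linarith)
  have hkey : 2*C/N * s = t + C := by
    rw [hs]; field_simp
  have hsN : s ≤ N := by
    rw [hs, div_le_iff₀ (by linarith)]
    nlinarith
  refine ⟨min (N-1) ⌊s⌋₊, lt_of_le_of_lt (min_le_left _ _) (Nat.sub_lt hN one_pos), ?_, ?_⟩
  · have h1 : ((min (N-1) ⌊s⌋₊ : ℕ) : ℝ) ≤ s := by
      have h2 : ((min (N-1) ⌊s⌋₊ : ℕ) : ℝ) ≤ ((⌊s⌋₊ : ℕ) : ℝ) := by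
        exact_mod_cast min_le_right (N-1) ⌊s⌋₊
      exact h2.trans (Nat.floor_le hs0)
    have h3 : 2*C/N * ((min (N-1) ⌊s⌋₊ : ℕ) : ℝ) ≤ 2*C/N * s :=
      mul_le_mul_of_nonneg_left h1 (by positivity)
    rw [hkey] at h3
    linarith
  · have h4 : s ≤ ((min (N-1) ⌊s⌋₊ : ℕ) : ℝ) + 1 := by
      rcases le_or_gt (⌊s⌋₊) (N-1) with hcase | hcase
      · rw [min_eq_right hcase]
        exact (Nat.lt_floor_add_one s).le
      · rw [min_eq_left hcase.le]
        have h6 : ((N - 1 : ℕ) : ℝ) + 1 = (N : ℝ) := by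
          have h7 : 1 ≤ N := hN
          push_cast [Nat.cast_sub h7]
          ring
        rw [h6]
        exact hsN
    have h5 : 2*C/N * s ≤ 2*C/N * (((min (N-1) ⌊s⌋₊ : ℕ) : ℝ) + 1) :=
      mul_le_mul_of_nonneg_left h4 (by positivity)
    rw [hkey] at h5
    linarith

lemma my_dir2 {E : Type*} [TopologicalSpace E] [PolishSpace E]
    [MeasurableSpace E] [BorelSpace E]
    (μ : ℝ → Measure E) (hμ : ∀ ε : ℝ, 0 < ε → IsProbabilityMeasure (μ ε))
    (I : E → ℝ≥0∞)
    (HD : ∀ F : Set E, IsClosed F →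
      Filter.limsup (fun ε : ℝ => (ε : EReal) * ENNReal.log (μ ε F)) (𝓝[>] (0:ℝ))
        ≤ -(⨅ x ∈ F, (I x : EReal)))
    (h : E → ℝ) (hc : Continuous h) {C : ℝ} (hC : ∀ x, |h x| ≤ C) :
    Filter.limsup (fun ε : ℝ => ((ε * Real.log (∫ x, Real.exp (-(h x) / ε) ∂(μ ε)) : ℝ) : EReal))
      (𝓝[>] (0:ℝ)) ≤ -(⨅ x : E, ((h x : EReal) + (I x : EReal))) := by
  rcases isEmpty_or_nonempty E with hE | hE
  · exfalso
    have h1 : (μ 1) univ = 1 := (hμ 1 one_pos).measure_univ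
    rw [Set.univ_eq_empty_iff.2 hE, measure_empty] at h1
    exact zero_ne_one h1
  rcases le_or_gt C 0 with hC0 | hCpos
  · have hzero : ∀ x, h x = 0 := fun x =>
      abs_eq_zero.1 (le_antisymm ((hC x).trans hC0) (abs_nonneg _))
    have hev : ∀ᶠ ε : ℝ in 𝓝[>] (0:ℝ),
        ((ε * Real.log (∫ x, Real.exp (-(h x) / ε) ∂(μ ε)) : ℝ) : EReal) = ((0:ℝ) : EReal) := by
      filter_upwards [self_mem_nhdsWithin] with ε (hε : ε ∈ Ioi (0:ℝ))
      haveI := hμ ε hε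
      simp [hzero]
    rw [limsup_congr hev, limsup_const]
    have h2 := HD univ isClosed_univ
    have hev2 : ∀ᶠ ε : ℝ in 𝓝[>] (0:ℝ),
        (ε : EReal) * ENNReal.log (μ ε univ) = ((0:ℝ) : EReal) := by
      filter_upwards [self_mem_nhdsWithin] with ε (hε : ε ∈ Ioi (0:ℝ))
      haveI := hμ ε hε
      rw [measure_univ, ENNReal.log_one, mul_zero]
      rfl
    rw [limsup_congr hev2, limsup_const] at h2
    have heq : (⨅ x : E, ((h x : EReal) + (I x : EReal))) = ⨅ x ∈ univ, (I x : EReal) := by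
      rw [iInf_univ]
      exact iInf_congr fun x => by rw [hzero x, EReal.coe_zero, zero_add]
    rw [heq]
    exact h2
  -- main case : 0 < C
  set B := -(⨅ x : E, ((h x : EReal) + (I x : EReal))) with hB
  have key : ∀ N : ℕ, 0 < N → ∀ θ : ℝ, 0 < θ →
      Filter.limsup (fun ε : ℝ => ((ε * Real.log (∫ x, Real.exp (-(h x) / ε) ∂(μ ε)) : ℝ) : EReal))
        (𝓝[>] (0:ℝ)) ≤ (θ : EReal) + ((2*C/N : ℝ) : EReal) + B := by
    intro N hN θ hθ
    have hN' : (0:ℝ) < N := by exact_mod_cast hN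
    set a : ℕ → ℝ := fun i => -C + 2*C/N * i with ha
    set Fi : ℕ → Set E := fun i => h ⁻¹' (Icc (a i) (a (i+1))) with hFi
    have hFic : ∀ i, IsClosed (Fi i) := fun i => isClosed_Icc.preimage hc
    have hrne : (Finset.range N).Nonempty := Finset.nonempty_range_iff.2 hN.ne'
    set G : ℕ → ℝ → EReal :=
      fun i ε => ((-(a i) : ℝ) : EReal) + (ε : EReal) * ENNReal.log (μ ε (Fi i)) with hG
    have hev : ∀ᶠ ε : ℝ in 𝓝[>] (0:ℝ),
        ((ε * Real.log (∫ x, Real.exp (-(h x) / ε) ∂(μ ε)) : ℝ) : EReal)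
          ≤ (θ : EReal) + (Finset.range N).sup' hrne (fun i => G i ε) := by
      have hlogN : 0 ≤ Real.log N := Real.log_nonneg (by exact_mod_cast hN)
      have hmem : Ioo (0:ℝ) (θ / (Real.log N + 1)) ∈ 𝓝[>] (0:ℝ) :=
        Ioo_mem_nhdsGT_of_mem ⟨le_refl 0, by positivity⟩
      filter_upwards [hmem] with ε hε
      obtain ⟨hε0, hεθ⟩ := hε
      haveI := hμ ε hε0
      set Iε := ∫ x, Real.exp (-(h x) / ε) ∂(μ ε) with hIe
      have hbnd : ∀ x, |(-(h x)) / ε| ≤ C / ε := fun x => by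
        rw [abs_div, abs_neg, abs_of_pos hε0]
        exact div_le_div_of_nonneg_right (hC x) hε0.le
      have hIpos : 0 < Iε := lt_of_lt_of_le (Real.exp_pos _)
        (my_exp_integral_pos (μ ε) (hc.neg.div_const ε) hbnd)
      have hintS : Integrable (fun x => ∑ i ∈ Finset.range N,
          (Fi i).indicator (fun _ => Real.exp (-(a i)/ε)) x) (μ ε) := by
        apply integrable_finset_sum
        intro i _
        exact (integrable_const _).indicator (hFic i).measurableSet
      have hsum : Iε ≤ ∑ i ∈ Finset.range N, Real.exp (-(a i) / ε) * (μ ε (Fi i)).toReal := by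
        have hpt : ∀ x, Real.exp (-(h x)/ε) ≤
            ∑ i ∈ Finset.range N, (Fi i).indicator (fun _ => Real.exp (-(a i)/ε)) x := by
          intro x
          obtain ⟨i, hiN, hil, hiu⟩ := my_cover hCpos (abs_le.1 (hC x)).1 (abs_le.1 (hC x)).2 hN
          have hxFi : x ∈ Fi i := by
            simp only [hFi, Set.mem_preimage, Set.mem_Icc, ha]
            push_cast
            exact ⟨hil, hiu⟩
          calc Real.exp (-(h x)/ε)
              ≤ (Fi i).indicator (fun _ => Real.exp (-(a i)/ε)) x := by
                rw [Set.indicator_of_mem hxFi]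
                apply Real.exp_le_exp.2
                apply div_le_div_of_nonneg_right _ hε0.le
                have hai : a i = -C + 2*C/(N:ℝ) * i := by rw [ha]
                rw [hai]
                linarith
          _ ≤ _ := Finset.single_le_sum
                (f := fun j => (Fi j).indicator (fun _ => Real.exp (-(a j)/ε)) x)
                (fun j _ => Set.indicator_nonneg (fun _ _ => (Real.exp_pos _).le) x)
                (Finset.mem_range.2 hiN)
        calc Iε ≤ ∫ x, (∑ i ∈ Finset.range N,
              (Fi i).indicator (fun _ => Real.exp (-(a i)/ε)) x) ∂(μ ε) :=
              integral_mono (my_exp_integrable (μ ε) (hc.neg.div_const ε)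
                (fun x => (abs_le.1 (hbnd x)).2)) hintS hpt
        _ = ∑ i ∈ Finset.range N, Real.exp (-(a i)/ε) * (μ ε (Fi i)).toReal := by
              rw [integral_finset_sum _
                (fun i _ => (integrable_const _).indicator (hFic i).measurableSet)]
              refine Finset.sum_congr rfl fun i _ => ?_
              rw [integral_indicator_const _ (hFic i).measurableSet, smul_eq_mul, mul_comm]; rfl
      set T := (Finset.range N).sup' hrne
        (fun i => Real.exp (-(a i)/ε) * (μ ε (Fi i)).toReal) with hT
      have hsumT : ∑ i ∈ Finset.range N, Real.exp (-(a i)/ε) * (μ ε (Fi i)).toReal ≤ N * T := by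
        have h9 := Finset.sum_le_card_nsmul (Finset.range N) _ T
          (fun i hi => Finset.le_sup' (f := fun i => Real.exp (-(a i)/ε) * (μ ε (Fi i)).toReal) hi)
        simpa [Finset.card_range, nsmul_eq_mul] using h9
      have hTpos : 0 < T := by
        by_contra hTle
        push_neg at hTle
        have h10 : Iε ≤ (N:ℝ) * T := hsum.trans hsumT
        nlinarith
      obtain ⟨i0, hi0mem, hTi0⟩ := Finset.exists_mem_eq_sup' hrne
        (fun i => Real.exp (-(a i)/ε) * (μ ε (Fi i)).toReal)
      have hTT : T = Real.exp (-(a i0)/ε) * (μ ε (Fi i0)).toReal := hT.trans hTi0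
      have hμpos : 0 < (μ ε (Fi i0)).toReal := by
        rcases lt_or_eq_of_le (ENNReal.toReal_nonneg (a := μ ε (Fi i0))) with hh | hh
        · exact hh
        · exfalso; rw [hTT, ← hh, mul_zero] at hTpos; exact lt_irrefl 0 hTpos
      have hlog : ε * Real.log Iε ≤
          ε * Real.log N + (-(a i0) + ε * Real.log (μ ε (Fi i0)).toReal) := by
        have h1 : Real.log Iε ≤ Real.log ((N:ℝ) * T) :=
          Real.log_le_log hIpos (hsum.trans hsumT)
        have h2 : Real.log ((N:ℝ) * T) = Real.log N + Real.log T :=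
          Real.log_mul (by positivity) hTpos.ne'
        have h3 : Real.log T = -(a i0)/ε + Real.log (μ ε (Fi i0)).toReal := by
          rw [hTT, Real.log_mul (Real.exp_pos _).ne' hμpos.ne', Real.log_exp]
        have h4 : ε * (-(a i0)/ε) = -(a i0) := by field_simp
        calc ε * Real.log Iε ≤ ε * (Real.log N + Real.log T) := by
              rw [← h2]; exact mul_le_mul_of_nonneg_left h1 hε0.le
        _ = ε * Real.log N + (-(a i0) + ε * Real.log (μ ε (Fi i0)).toReal) := by
              rw [h3, mul_add, mul_add, h4]
      have hθbd : ε * Real.log N ≤ θ := by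
        have h11 := (lt_div_iff₀ (by positivity : (0:ℝ) < Real.log N + 1)).1 hεθ
        nlinarith
      calc ((ε * Real.log Iε : ℝ) : EReal)
          ≤ ((ε * Real.log N + (-(a i0) + ε * Real.log (μ ε (Fi i0)).toReal) : ℝ) : EReal) :=
            EReal.coe_le_coe_iff.2 hlog
      _ = ((ε * Real.log N : ℝ) : EReal) + (((-(a i0) : ℝ)) : EReal)
            + ((ε * Real.log (μ ε (Fi i0)).toReal : ℝ) : EReal) := by
            norm_cast
            ring
      _ ≤ (θ : EReal) + G i0 ε := by
            rw [hG, add_assoc]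
            refine add_le_add (EReal.coe_le_coe_iff.2 hθbd) (add_le_add le_rfl (le_of_eq ?_))
            rw [ENNReal.log_pos_real' hμpos, ← EReal.coe_mul]
      _ ≤ (θ : EReal) + (Finset.range N).sup' hrne (fun i => G i ε) :=
            add_le_add le_rfl (Finset.le_sup' (f := fun i => G i ε) hi0mem)
    calc Filter.limsup (fun ε : ℝ =>
            ((ε * Real.log (∫ x, Real.exp (-(h x) / ε) ∂(μ ε)) : ℝ) : EReal)) (𝓝[>] (0:ℝ))
        ≤ Filter.limsup (fun ε : ℝ =>
            (θ : EReal) + (Finset.range N).sup' hrne (fun i => G i ε)) (𝓝[>] (0:ℝ)) :=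
          limsup_le_limsup hev
    _ ≤ (θ : EReal) + Filter.limsup (fun ε : ℝ =>
            (Finset.range N).sup' hrne (fun i => G i ε)) (𝓝[>] (0:ℝ)) :=
          my_limsup_const_add _ θ _
    _ = (θ : EReal) + (Finset.range N).sup' hrne
            (fun i => Filter.limsup (fun ε : ℝ => G i ε) (𝓝[>] (0:ℝ))) := by
          rw [limsup_finset_sup' hrne]
    _ ≤ (θ : EReal) + (((2*C/N : ℝ) : EReal) + B) := by
          refine add_le_add le_rfl (Finset.sup'_le hrne _ fun i hi => ?_)
          have hstep : Filter.limsup (fun ε : ℝ => G i ε) (𝓝[>] (0:ℝ))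
              ≤ ((-(a i) : ℝ) : EReal) + -(⨅ x ∈ Fi i, (I x : EReal)) := by
            refine le_trans (my_limsup_const_add _ _ _) (add_le_add le_rfl ?_)
            exact HD (Fi i) (hFic i)
          refine hstep.trans ?_
          rw [hB]
          refine my_per_i I h (δ := 2*C/N) (c := a i) ?_
          intro x hx
          rw [hFi] at hx
          have := hx.2
          rw [ha] at this ⊢
          push_cast at this
          linarith
    _ = (θ : EReal) + ((2*C/N : ℝ) : EReal) + B := (add_assoc _ _ _).symm
  apply my_le_of_forall_le_add
  intro r hr
  obtain ⟨n, hn⟩ := exists_nat_gt (4*C/r)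
  have hn' : (0:ℝ) < n := lt_trans (by positivity) hn
  have hn0 : 0 < n := by exact_mod_cast hn'
  have h2 : 2*C/(n:ℝ) < r/2 := by
    rw [div_lt_div_iff₀ hn' (by norm_num : (0:ℝ) < 2)]
    have h4 : 4*C < (n:ℝ) * r := by
      have := (div_lt_iff₀ hr).1 hn
      linarith
    linarith
  refine le_trans (key n hn0 (r/2) (by positivity)) ?_
  refine add_le_add ?_ le_rfl
  rw [show ((r/2 : ℝ) : EReal) + ((2*C/n : ℝ) : EReal) = ((r/2 + 2*C/n : ℝ) : EReal) from
    (EReal.coe_add _ _).symm]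
  exact EReal.coe_le_coe_iff.2 (by linarith)

/-- **Laplace principle upper bound ↔ large deviation upper bound.**
`E` is Polish, `μ ε` are Borel probability measures on `E` for `ε > 0`, and `I` is a
rate function on `E` (nonnegative, extended-real-valued, with compact sublevel sets). -/
theorem stmt_0 {E : Type*} [TopologicalSpace E] [PolishSpace E]
    [MeasurableSpace E] [BorelSpace E]
    (μ : ℝ → Measure E) (hμ : ∀ ε : ℝ, 0 < ε → IsProbabilityMeasure (μ ε))
    (I : E → ℝ≥0∞) (hI : ∀ M : ℝ≥0∞, M ≠ ⊤ → IsCompact {x : E | I x ≤ M}) :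
    (∀ h : E → ℝ, Continuous h → (∃ C : ℝ, ∀ x, |h x| ≤ C) →
      Filter.limsup
        (fun ε : ℝ =>
          ((ε * Real.log (∫ x, Real.exp (-(h x) / ε) ∂(μ ε)) : ℝ) : EReal))
        (𝓝[>] (0:ℝ))
        ≤ -(⨅ x : E, ((h x : EReal) + (I x : EReal))))
    ↔
    (∀ F : Set E, IsClosed F →
      Filter.limsup (fun ε : ℝ => (ε : EReal) * ENNReal.log (μ ε F)) (𝓝[>] (0:ℝ))
        ≤ -(⨅ x ∈ F, (I x : EReal))) := by
  constructor
  · intro HL F hF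
    exact my_dir1 μ hμ I hI HL hF
  · intro HD h hc hCex
    obtain ⟨C, hC⟩ := hCex
    exact my_dir2 μ hμ I HD h hc hC
end

section
/- Let E be a Polish space, let (μ_ε)_{ε>0} be a family of Borel probability measures on E, and let I be a rate function on E. Then the Laplace principle lower bound holds with rate function I — i.e., for every bounded continuous h : E → ℝ, liminf_{ε→0⁺} ε·log ∫_E exp(−h(x)/ε) μ_ε(dx) ≥ −inf_{x∈E}{h(x)+I(x)} — if and only if the large deviation lower bound holds with rate function I, i.e., for every open set U ⊆ E, liminf_{ε→0⁺} ε·log μ_ε(U) ≥ −inf_{x∈U} I(x). -/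
open MeasureTheory Filter Set Topology
open scoped ENNReal NNReal

private lemma aux_coe_ennreal (x : ℝ≥0∞) (hx : x ≠ ⊤) : (x : EReal) = ((x.toReal : ℝ) : EReal) := by
  lift x to ℝ≥0 using hx
  simp [EReal.coe_nnreal_eq_coe_real]

private lemma aux_cont_add (c : ℝ) : Continuous (fun x : EReal => (c : EReal) + x) := by
  rw [continuous_iff_continuousAt]
  intro x
  exact (EReal.continuousAt_add (Or.inl (EReal.coe_ne_top c)) (Or.inl (EReal.coe_ne_bot c))).comp
    ((continuous_const.prodMk continuous_id).continuousAt)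

private lemma aux_le_of_forall (a b : EReal) (h : ∀ δ : ℝ, 0 < δ → a ≤ (δ : EReal) + b) :
    a ≤ b := by
  induction b with
  | bot => simpa using h 1 one_pos
  | coe r =>
      by_contra hc
      push_neg at hc
      obtain ⟨y, hy1, hy2⟩ := EReal.exists_between_coe_real hc
      have := h (y - r) (by exact_mod_cast sub_pos.2 (by exact_mod_cast hy1))
      rw [← EReal.coe_add] at this
      have : a ≤ (y : EReal) := by simpa using this
      exact absurd (lt_of_le_of_lt this hy2) (lt_irrefl a)
  | top => exact le_top

private lemma aux_integrable {E : Type*} [MeasurableSpace E] [TopologicalSpace E]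
    [OpensMeasurableSpace E]
    (ν : Measure E) [IsFiniteMeasure ν] (h : E → ℝ) (hcont : Continuous h)
    (C : ℝ) (hC : ∀ x, |h x| ≤ C) (ε : ℝ) (hε : 0 < ε) :
    Integrable (fun x => Real.exp (-(h x) / ε)) ν := by
  refine Integrable.mono' (integrable_const (Real.exp (C / ε)))
    ((hcont.neg.div_const ε).rexp.aestronglyMeasurable) ?_
  filter_upwards with x
  rw [Real.norm_eq_abs, abs_of_pos (Real.exp_pos _)]
  refine Real.exp_le_exp.2 ?_
  have := (abs_le.1 (hC x)).1
  gcongr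
  linarith

private lemma aux_lower {E : Type*} [MeasurableSpace E] [TopologicalSpace E]
    [OpensMeasurableSpace E]
    (ν : Measure E) [IsProbabilityMeasure ν] (h : E → ℝ) (hcont : Continuous h)
    (C : ℝ) (hC : ∀ x, |h x| ≤ C) (U : Set E) (hU : IsOpen U) (c : ℝ)
    (hc : ∀ x ∈ U, h x < c) (ε : ℝ) (hε : 0 < ε) :
    ((-c : ℝ) : EReal) + (ε : EReal) * ENNReal.log (ν U) ≤
      ((ε * Real.log (∫ x, Real.exp (-(h x) / ε) ∂ν) : ℝ) : EReal) := by
  by_cases hν0 : ν U = 0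
  · rw [hν0, ENNReal.log_zero, EReal.mul_bot_of_pos (by exact_mod_cast hε), EReal.add_bot]
    exact bot_le
  have hνtop : ν U ≠ ⊤ := measure_ne_top ν U
  have htpos : 0 < (ν U).toReal := ENNReal.toReal_pos hν0 hνtop
  have hkey : Real.exp (-c / ε) * (ν U).toReal ≤ ∫ x, Real.exp (-(h x) / ε) ∂ν := by
    have hind : ∫ x, U.indicator (fun _ => Real.exp (-c / ε)) x ∂ν
        = (ν U).toReal • Real.exp (-c / ε) := integral_indicator_const _ hU.measurableSet
    rw [mul_comm, ← smul_eq_mul, ← hind]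
    refine integral_mono ((integrable_const _).indicator hU.measurableSet)
      (aux_integrable ν h hcont C hC ε hε) ?_
    intro x
    by_cases hx : x ∈ U
    · simp only [indicator_of_mem hx]
      exact Real.exp_le_exp.2 (by gcongr; exact (hc x hx).le)
    · simp only [indicator_of_notMem hx]
      exact (Real.exp_pos _).le
  have hIpos : 0 < ∫ x, Real.exp (-(h x) / ε) ∂ν :=
    lt_of_lt_of_le (mul_pos (Real.exp_pos _) htpos) hkey
  have hlog : ENNReal.log (ν U) = ((Real.log (ν U).toReal : ℝ) : EReal) := by
    simp [ENNReal.log, hν0, hνtop]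
  rw [hlog, ← EReal.coe_mul, ← EReal.coe_add, EReal.coe_le_coe_iff]
  have h1 : Real.log (Real.exp (-c / ε) * (ν U).toReal) ≤
      Real.log (∫ x, Real.exp (-(h x) / ε) ∂ν) :=
    Real.log_le_log (mul_pos (Real.exp_pos _) htpos) hkey
  rw [Real.log_mul (Real.exp_ne_zero _) (ne_of_gt htpos), Real.log_exp] at h1
  have h2 : ε * (-c / ε + Real.log (ν U).toReal) ≤
      ε * Real.log (∫ x, Real.exp (-(h x) / ε) ∂ν) :=
    mul_le_mul_of_nonneg_left h1 hε.le
  calc -c + ε * Real.log (ν U).toReal = ε * (-c / ε + Real.log (ν U).toReal) := by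
        field_simp
      _ ≤ _ := h2

private lemma aux_upper {E : Type*} [MeasurableSpace E] [TopologicalSpace E]
    [OpensMeasurableSpace E]
    (ν : Measure E) [IsProbabilityMeasure ν] (h : E → ℝ) (hcont : Continuous h)
    (M : ℝ) (hM : 0 < M) (hh0 : ∀ x, 0 ≤ h x) (hhM : ∀ x, h x ≤ M)
    (U : Set E) (hU : IsOpen U) (hUc : ∀ x ∉ U, h x = M) (ε : ℝ) (hε : 0 < ε) :
    ((ε * Real.log (∫ x, Real.exp (-(h x) / ε) ∂ν) : ℝ) : EReal) ≤
      ((ε * Real.log 2 : ℝ) : EReal) + max ((ε : EReal) * ENNReal.log (ν U)) ((-M : ℝ) : EReal) := by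
  have hC : ∀ x, |h x| ≤ M := fun x => abs_le.2 ⟨by linarith [hh0 x], hhM x⟩
  have hint := aux_integrable ν h hcont M hC ε hε
  set t := (ν U).toReal with ht
  set e := Real.exp (-M / ε) with he
  have hepos : 0 < e := Real.exp_pos _
  have htnn : 0 ≤ t := ENNReal.toReal_nonneg
  have hub : ∫ x, Real.exp (-(h x) / ε) ∂ν ≤ t + e := by
    have hconst : Integrable (fun _ : E => e) ν := integrable_const e
    have hind : Integrable (fun x => U.indicator (fun _ => (1:ℝ)) x) ν :=
      (integrable_const _).indicator hU.measurableSet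
    have heq : ∫ x, (U.indicator (fun _ => (1:ℝ)) x + e) ∂ν = t + e := by
      rw [integral_add hind hconst, integral_indicator_const _ hU.measurableSet,
        integral_const, probReal_univ]
      simp [ht, Measure.real]
    rw [← heq]
    refine integral_mono hint (hind.add hconst) ?_
    intro x
    by_cases hx : x ∈ U
    · simp only [indicator_of_mem hx]
      have : Real.exp (-(h x) / ε) ≤ 1 :=
        Real.exp_le_one_iff.2 (div_nonpos_iff.2 (Or.inr ⟨by linarith [hh0 x], hε.le⟩))
      linarith
    · simp only [indicator_of_notMem hx, hUc x hx, zero_add, he, le_refl]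
  have hlb : e ≤ ∫ x, Real.exp (-(h x) / ε) ∂ν := by
    have : ∫ _x, e ∂ν = e := by rw [integral_const, probReal_univ]; simp
    rw [← this]
    refine integral_mono (integrable_const e) hint fun x => Real.exp_le_exp.2 ?_
    exact (div_le_div_iff_of_pos_right hε).2 (by linarith [hhM x])
  have hIpos : 0 < ∫ x, Real.exp (-(h x) / ε) ∂ν := lt_of_lt_of_le hepos hlb
  have hmaxpos : 0 < max t e := lt_max_of_lt_right hepos
  have hlog2 : Real.log (∫ x, Real.exp (-(h x) / ε) ∂ν) ≤ Real.log 2 + Real.log (max t e) := by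
    rw [← Real.log_mul two_ne_zero (ne_of_gt hmaxpos)]
    refine Real.log_le_log hIpos (hub.trans ?_)
    have h1 : t ≤ max t e := le_max_left _ _
    have h2 : e ≤ max t e := le_max_right _ _
    linarith
  have hloge : ε * Real.log e = -M := by
    rw [he, Real.log_exp]; field_simp
  by_cases hν0 : ν U = 0
  · have ht0 : t = 0 := by rw [ht, hν0]; simp
    have hmax : max t e = e := max_eq_right (by linarith)
    have : ε * Real.log (∫ x, Real.exp (-(h x) / ε) ∂ν) ≤ ε * Real.log 2 + -M := by
      rw [← hloge]
      have h' := mul_le_mul_of_nonneg_left hlog2 hε.le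
      rw [hmax, mul_add] at h'
      linarith
    rw [hν0, ENNReal.log_zero, EReal.mul_bot_of_pos (by exact_mod_cast hε),
      max_eq_right (bot_le : (⊥:EReal) ≤ _), ← EReal.coe_add]
    exact_mod_cast this
  · have hνtop : ν U ≠ ⊤ := measure_ne_top ν U
    have htpos : 0 < t := ENNReal.toReal_pos hν0 hνtop
    have hlogν : ENNReal.log (ν U) = ((Real.log t : ℝ) : EReal) := by
      simp [ENNReal.log, hν0, hνtop, ht]
    have hlogmax : Real.log (max t e) = max (Real.log t) (Real.log e) := by
      rcases le_total t e with hte | het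
      · rw [max_eq_right hte, max_eq_right (Real.log_le_log htpos hte)]
      · rw [max_eq_left het, max_eq_left (Real.log_le_log hepos het)]
    have hreal : ε * Real.log (∫ x, Real.exp (-(h x) / ε) ∂ν) ≤
        ε * Real.log 2 + max (ε * Real.log t) (-M) := by
      have h' := mul_le_mul_of_nonneg_left hlog2 hε.le
      rw [mul_add, hlogmax, mul_max_of_nonneg _ _ hε.le, hloge] at h'
      exact h'
    rw [hlogν, ← EReal.coe_mul, ← Monotone.map_max EReal.coe_strictMono.monotone,
      ← EReal.coe_add]
    exact_mod_cast hreal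

/-- **Laplace principle lower bound ↔ large deviation lower bound.**
`E` is Polish, `μ ε` are Borel probability measures on `E` for `ε > 0`, and `I` is a
rate function on `E` (nonnegative, extended-real-valued, with compact sublevel sets). -/
theorem stmt_1 {E : Type*} [TopologicalSpace E] [PolishSpace E]
    [MeasurableSpace E] [BorelSpace E]
    (μ : ℝ → Measure E) (hμ : ∀ ε : ℝ, 0 < ε → IsProbabilityMeasure (μ ε))
    (I : E → ℝ≥0∞) (hI : ∀ M : ℝ≥0∞, M ≠ ⊤ → IsCompact {x : E | I x ≤ M}) :
    (∀ h : E → ℝ, Continuous h → (∃ C : ℝ, ∀ x, |h x| ≤ C) →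
      -(⨅ x : E, ((h x : EReal) + (I x : EReal))) ≤
        Filter.liminf
          (fun ε : ℝ =>
            ((ε * Real.log (∫ x, Real.exp (-(h x) / ε) ∂(μ ε)) : ℝ) : EReal))
          (𝓝[>] (0:ℝ)))
    ↔
    (∀ U : Set E, IsOpen U →
      -(⨅ x ∈ U, (I x : EReal)) ≤
        Filter.liminf (fun ε : ℝ => (ε : EReal) * ENNReal.log (μ ε U)) (𝓝[>] (0:ℝ))) := by
  constructor
  · -- Laplace principle lower bound ⟹ large deviation lower bound
    intro hLP U hU
    set L := Filter.liminf (fun ε : ℝ => (ε : EReal) * ENNReal.log (μ ε U)) (𝓝[>] (0:ℝ)) with hL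
    refine EReal.neg_le.mpr (le_iInf₂ fun x₀ hx₀ => ?_)
    by_cases hIx : I x₀ = ⊤
    · rw [hIx, EReal.coe_ennreal_top]; exact le_top
    refine EReal.neg_le.mp ?_
    set r := (I x₀).toReal with hr
    have hIr : (I x₀ : EReal) = ((r : ℝ) : EReal) := aux_coe_ennreal _ hIx
    rw [hIr, ← EReal.coe_neg]
    -- construct the auxiliary function h
    letI := TopologicalSpace.upgradeIsCompletelyMetrizable E
    obtain ⟨δ, hδpos, hball⟩ := Metric.isOpen_iff.mp hU x₀ hx₀
    set M := r + 1 with hMdef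
    have hrnn : 0 ≤ r := ENNReal.toReal_nonneg
    have hM : 0 < M := by positivity
    set h : E → ℝ := fun x => M * min 1 (dist x x₀ / δ) with hhdef
    have hcont : Continuous h :=
      continuous_const.mul (continuous_const.min
        ((continuous_id.dist continuous_const).div_const δ))
    have hh0 : ∀ x, 0 ≤ h x := fun x =>
      mul_nonneg hM.le (le_min zero_le_one (div_nonneg dist_nonneg hδpos.le))
    have hhM : ∀ x, h x ≤ M := fun x => by
      have : min 1 (dist x x₀ / δ) ≤ 1 := min_le_left _ _
      calc h x ≤ M * 1 := mul_le_mul_of_nonneg_left this hM.le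
        _ = M := mul_one M
    have hhx₀ : h x₀ = 0 := by simp [hhdef]
    have hUc : ∀ x ∉ U, h x = M := by
      intro x hx
      have hd : δ ≤ dist x x₀ := by
        by_contra hdc
        push_neg at hdc
        exact hx (hball (Metric.mem_ball.2 hdc))
      have h1 : (1:ℝ) ≤ dist x x₀ / δ := (one_le_div hδpos).2 hd
      simp [hhdef, min_eq_left h1]
    -- Laplace principle applied to h
    have hL1 : ((-r : ℝ) : EReal) ≤
        Filter.liminf
          (fun ε : ℝ =>
            ((ε * Real.log (∫ x, Real.exp (-(h x) / ε) ∂(μ ε)) : ℝ) : EReal))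
          (𝓝[>] (0:ℝ)) := by
      refine le_trans ?_
        (hLP h hcont ⟨M, fun x => abs_le.2 ⟨by linarith [hh0 x], hhM x⟩⟩)
      rw [EReal.coe_neg]
      refine EReal.neg_le_neg_iff.2 ?_
      refine le_trans (iInf_le _ x₀) ?_
      rw [hhx₀, hIr]
      simp
    -- liminf upper bound
    have hmain : ((-r : ℝ) : EReal) ≤ max L ((-M : ℝ) : EReal) := by
      refine aux_le_of_forall _ _ fun η hη => ?_
      have hev : ∀ᶠ ε in 𝓝[>] (0:ℝ),
          ((ε * Real.log (∫ x, Real.exp (-(h x) / ε) ∂(μ ε)) : ℝ) : EReal) ≤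
            (η : EReal) + max ((ε : EReal) * ENNReal.log (μ ε U)) ((-M : ℝ) : EReal) := by
        have hmem : Ioo (0:ℝ) (η / Real.log 2) ∈ 𝓝[>] (0:ℝ) :=
          Ioo_mem_nhdsGT_of_mem ⟨le_refl 0, by positivity⟩
        filter_upwards [hmem] with ε hε
        haveI := hμ ε hε.1
        refine le_trans (aux_upper (μ ε) h hcont M hM hh0 hhM U hU hUc ε hε.1) ?_
        refine add_le_add_left ?_ _
        have hε2 : ε * Real.log 2 ≤ η := by
          have := (lt_div_iff₀ (Real.log_pos one_lt_two)).1 hε.2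
          linarith
        exact_mod_cast hε2
      refine le_trans hL1 (le_trans (liminf_le_liminf hev) ?_)
      have hmono : Monotone (fun x : EReal => (η : EReal) + max x ((-M : ℝ) : EReal)) :=
        fun a b hab => add_le_add_right (max_le_max hab le_rfl) _
      have hcontf : Continuous (fun x : EReal => (η : EReal) + max x ((-M : ℝ) : EReal)) :=
        (aux_cont_add η).comp (continuous_id.max continuous_const)
      have := (hmono.map_liminf_of_continuousAt
        (fun ε : ℝ => (ε : EReal) * ENNReal.log (μ ε U)) hcontf.continuousAt
        (F := 𝓝[>] (0:ℝ)))
      rw [← hL] at this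
      exact le_of_eq this.symm
    rcases le_max_iff.1 hmain with hcase | hcase
    · exact hcase
    · exfalso
      rw [EReal.coe_le_coe_iff] at hcase
      rw [hMdef] at hcase
      linarith
  · -- large deviation lower bound ⟹ Laplace principle lower bound
    intro hLD h hcont hbdd
    obtain ⟨C, hC⟩ := hbdd
    refine EReal.neg_le.mpr (le_iInf fun x₀ => ?_)
    by_cases hIx : I x₀ = ⊤
    · rw [hIx, EReal.coe_ennreal_top, EReal.coe_add_top]; exact le_top
    refine EReal.neg_le.mp ?_
    set r := (I x₀).toReal with hr
    have hIr : (I x₀ : EReal) = ((r : ℝ) : EReal) := aux_coe_ennreal _ hIx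
    rw [hIr, ← EReal.coe_add, ← EReal.coe_neg]
    refine aux_le_of_forall _ _ fun δ hδ => ?_
    set c := h x₀ + δ with hc
    set U := {y | h y < c} with hUdef
    have hUopen : IsOpen U := isOpen_lt hcont continuous_const
    have hx₀U : x₀ ∈ U := by
      simp only [hUdef, mem_setOf_eq, hc]
      linarith
    have hpt : ∀ᶠ ε : ℝ in 𝓝[>] (0:ℝ),
        ((-c : ℝ) : EReal) + (ε : EReal) * ENNReal.log (μ ε U) ≤
          ((ε * Real.log (∫ x, Real.exp (-(h x) / ε) ∂(μ ε)) : ℝ) : EReal) := by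
      filter_upwards [self_mem_nhdsWithin] with ε hε
      haveI := hμ ε hε
      exact aux_lower (μ ε) h hcont C hC U hUopen c (fun x hx => hx) ε hε
    set L := Filter.liminf (fun ε : ℝ => (ε : EReal) * ENNReal.log (μ ε U)) (𝓝[>] (0:ℝ)) with hL
    have h2 : Filter.liminf
        (fun ε : ℝ => ((-c : ℝ) : EReal) + (ε : EReal) * ENNReal.log (μ ε U)) (𝓝[>] (0:ℝ))
        = ((-c : ℝ) : EReal) + L := by
      have hmono : Monotone (fun x : EReal => ((-c : ℝ) : EReal) + x) :=
        fun a b hab => add_le_add_right hab _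
      have := (hmono.map_liminf_of_continuousAt
        (fun ε : ℝ => (ε : EReal) * ENNReal.log (μ ε U)) (aux_cont_add (-c)).continuousAt
        (F := 𝓝[>] (0:ℝ)))
      rw [← hL] at this
      exact this.symm
    have h3 : ((-r : ℝ) : EReal) ≤ L := by
      rw [EReal.coe_neg]
      refine le_trans (EReal.neg_le_neg_iff.2 ?_) (hLD U hUopen)
      exact le_trans (iInf₂_le x₀ hx₀U) (le_of_eq hIr)
    have h4 : ((-c + -r : ℝ) : EReal) ≤
        Filter.liminf
          (fun ε : ℝ =>
            ((ε * Real.log (∫ x, Real.exp (-(h x) / ε) ∂(μ ε)) : ℝ) : EReal))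
          (𝓝[>] (0:ℝ)) := by
      refine le_trans ?_ (liminf_le_liminf hpt)
      rw [h2, EReal.coe_add]
      exact add_le_add_right h3 _
    have h5 : ((-(h x₀ + r) : ℝ) : EReal) = (δ : EReal) + ((-c + -r : ℝ) : EReal) := by
      rw [← EReal.coe_add]
      norm_cast
      rw [hc]
      ring
    rw [h5]
    exact add_le_add_right h4 _
end

section
/- Assume (i) for every M < ∞ and every compact K ⊆ E₀ the set Γ_{M,K} is a compact subset of E, and (ii) for every f ∈ E the map x ↦ I_x(f) is lower semicontinuous on E₀. Then for every compact K ⊆ E₀ and every M < ∞ one has the set identity ⋃_{x∈K}{f ∈ E : I_x(f) ≤ M} = ⋂_{n=1}^∞ Γ_{2M+1/n, K}. -/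
open MeasureTheory Filter Set Topology
open scoped ENNReal NNReal

/-- **Set identity `⋃_{x∈K}{f : I_x(f) ≤ M} = ⋂_{n≥1} Γ_{2M+1/n, K}`.**
`E₀`, `E` are Polish, `H` is a real separable Hilbert space, `T > 0`, and
`G⁰ : E₀ × C([0,T];H) → E` is measurable.  `I x f` is the infimum of
`(1/2)∫₀^T ‖u(s)‖² ds` over all `u ∈ L²([0,T];H)` with `f = G⁰(x, ∫₀^· u)`, and
`Γ M K` is the image under `G⁰` of `K × {∫₀^· u : ∫₀^T ‖u‖² ≤ M}`.
Assuming every `Γ M K` (for `M < ∞`, `K` compact) is compact and `x ↦ I x f` is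
lower semicontinuous for each `f`, the stated identity holds. -/
theorem stmt_4 {E₀ E H : Type*}
    [TopologicalSpace E₀] [PolishSpace E₀] [MeasurableSpace E₀] [BorelSpace E₀]
    [TopologicalSpace E] [PolishSpace E] [MeasurableSpace E] [BorelSpace E]
    [NormedAddCommGroup H] [InnerProductSpace ℝ H] [CompleteSpace H]
    [SecondCountableTopology H]
    (T : ℝ) (hT : 0 < T)
    (G : E₀ × C(Icc (0:ℝ) T, H) → E)
    (hG : Measurable[@Prod.instMeasurableSpace E₀ C(Icc (0:ℝ) T, H) _
      (borel C(Icc (0:ℝ) T, H))] G)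
    (I : E₀ → E → ℝ≥0∞)
    (hIdef : ∀ x f, I x f = sInf {c : ℝ≥0∞ |
      ∃ u : ℝ → H, MemLp u 2 ((volume : Measure ℝ).restrict (Icc (0:ℝ) T)) ∧
        (∃ φ : C(Icc (0:ℝ) T, H),
          (∀ t : Icc (0:ℝ) T, φ t = ∫ s in Icc (0:ℝ) (t:ℝ), u s) ∧ f = G (x, φ)) ∧
        c = ENNReal.ofReal (2⁻¹ * ∫ s in Icc (0:ℝ) T, ‖u s‖ ^ 2)})
    (Γ : ℝ → Set E₀ → Set E)
    (hΓdef : ∀ M K, Γ M K = {f : E | ∃ x ∈ K, ∃ u : ℝ → H,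
        MemLp u 2 ((volume : Measure ℝ).restrict (Icc (0:ℝ) T)) ∧
        (∫ s in Icc (0:ℝ) T, ‖u s‖ ^ 2) ≤ M ∧
        ∃ φ : C(Icc (0:ℝ) T, H),
          (∀ t : Icc (0:ℝ) T, φ t = ∫ s in Icc (0:ℝ) (t:ℝ), u s) ∧ f = G (x, φ)})
    (hcomp : ∀ M : ℝ, ∀ K : Set E₀, IsCompact K → IsCompact (Γ M K))
    (hlsc : ∀ f : E, LowerSemicontinuous fun x => I x f) :
    ∀ K : Set E₀, IsCompact K → ∀ M : ℝ, 0 ≤ M →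
      (⋃ x ∈ K, {f : E | I x f ≤ ENNReal.ofReal M}) =
        ⋂ (n : ℕ) (_ : 1 ≤ n), Γ (2 * M + 1 / (n : ℝ)) K := by
  intro K hK M hM
  ext f
  simp only [mem_iUnion, mem_iInter, mem_setOf_eq]
  constructor
  · rintro ⟨x, hx, hI⟩ n hn
    rw [hΓdef]
    have hn0 : (0:ℝ) < (n:ℝ) := by exact_mod_cast hn
    have hpos : (0:ℝ) < 1 / (2 * n) := by positivity
    have hlt : I x f < ENNReal.ofReal M + ENNReal.ofReal (1 / (2 * n)) :=
      lt_of_le_of_lt hI (ENNReal.lt_add_right ENNReal.ofReal_ne_top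
        (ENNReal.ofReal_pos.mpr hpos).ne')
    rw [hIdef] at hlt
    obtain ⟨c, hc, hclt⟩ := sInf_lt_iff.mp hlt
    obtain ⟨u, hu, ⟨φ, hφ, hf⟩, rfl⟩ := hc
    refine ⟨x, hx, u, hu, ?_, φ, hφ, hf⟩
    rw [← ENNReal.ofReal_add hM hpos.le] at hclt
    have h2 : 2⁻¹ * ∫ s in Icc (0:ℝ) T, ‖u s‖ ^ 2 < M + 1 / (2 * n) :=
      (ENNReal.ofReal_lt_ofReal_iff (by positivity)).mp hclt
    have h3 : (1:ℝ) / (2 * n) = 2⁻¹ * (1 / n) := by field_simp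
    nlinarith [h2, h3]
  · intro h
    letI := TopologicalSpace.upgradeIsCompletelyMetrizable E₀
    have key : ∀ n : ℕ, ∃ x ∈ K, I x f ≤ ENNReal.ofReal (M + 1 / ((n:ℝ) + 1)) := by
      intro n
      have hmem := h (n + 1) (by omega)
      rw [hΓdef] at hmem
      obtain ⟨x, hx, u, hu, hint, φ, hφ, hf⟩ := hmem
      refine ⟨x, hx, ?_⟩
      rw [hIdef]
      have hmemS : ENNReal.ofReal (2⁻¹ * ∫ s in Icc (0:ℝ) T, ‖u s‖ ^ 2) ∈
          {c : ℝ≥0∞ |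
            ∃ u : ℝ → H, MemLp u 2 ((volume : Measure ℝ).restrict (Icc (0:ℝ) T)) ∧
              (∃ φ : C(Icc (0:ℝ) T, H),
                (∀ t : Icc (0:ℝ) T, φ t = ∫ s in Icc (0:ℝ) (t:ℝ), u s) ∧ f = G (x, φ)) ∧
              c = ENNReal.ofReal (2⁻¹ * ∫ s in Icc (0:ℝ) T, ‖u s‖ ^ 2)} :=
        ⟨u, hu, ⟨φ, hφ, hf⟩, rfl⟩
      refine le_trans (sInf_le hmemS) (ENNReal.ofReal_le_ofReal ?_)
      have hcast : ((n + 1 : ℕ) : ℝ) = (n : ℝ) + 1 := by push_cast; ring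
      rw [hcast] at hint
      have hn1 : (0:ℝ) < (n:ℝ) + 1 := by positivity
      have h1n : (0:ℝ) < 1 / ((n:ℝ) + 1) := by positivity
      nlinarith [hint, h1n]
    choose x hxK hxI using key
    obtain ⟨a, haK, ψ, hψmono, hψtend⟩ := hK.tendsto_subseq hxK
    refine ⟨a, haK, ?_⟩
    by_contra hcon
    push_neg at hcon
    obtain ⟨y, hy1, hy2⟩ := exists_between hcon
    have hev1 : ∀ᶠ k in atTop, y < I (x (ψ k)) f := hψtend.eventually (hlsc f a y hy2)
    have htendR : Tendsto (fun k : ℕ => M + 1 / ((ψ k : ℝ) + 1)) atTop (𝓝 (M + 0)) := by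
      refine tendsto_const_nhds.add ?_
      exact tendsto_one_div_add_atTop_nhds_zero_nat.comp hψmono.tendsto_atTop
    rw [add_zero] at htendR
    have htend : Tendsto (fun k : ℕ => ENNReal.ofReal (M + 1 / ((ψ k : ℝ) + 1))) atTop
        (𝓝 (ENNReal.ofReal M)) := (ENNReal.continuous_ofReal.tendsto M).comp htendR
    have hev2 : ∀ᶠ k in atTop, ENNReal.ofReal (M + 1 / ((ψ k : ℝ) + 1)) < y :=
      htend.eventually_lt_const hy1
    obtain ⟨k, h1, h2⟩ := (hev1.and hev2).exists
    exact absurd (lt_of_le_of_lt (hxI (ψ k)) h2) (not_lt.mpr h1.le)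
end

section
/- Fix α ∈ (0, ᾱ). For every f ∈ C([0,T]:B_α), the map x ↦ I_x(f) from B_α to [0,∞] is lower semicontinuous with respect to the norm ‖·‖_α. -/
open MeasureTheory Filter Set Topology
open scoped ENNReal NNReal

noncomputable section

/-- Euclidean space `ℝ^d`. -/
abbrev Euc (d : ℕ) := EuclideanSpace ℝ (Fin d)

/-- The (extended-real-valued) `α`-Hölder norm of `ψ` on `O`:
`sup_{r∈O} |ψ r| + sup_{r,q∈O} |ψ r - ψ q| / |r-q|^α`. -/
def hNorm {d : ℕ} (O : Set (Euc d)) (α : ℝ) (ψ : Euc d → ℝ) : ℝ≥0∞ :=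
  (⨆ r : O, (‖ψ r‖₊ : ℝ≥0∞)) +
    ⨆ p : O × O,
      (‖ψ p.1 - ψ p.2‖₊ : ℝ≥0∞) / edist (p.1 : Euc d) (p.2 : Euc d) ^ α

/-- `f` is an element of `C([0,T] : B_α)`: every `f t`, `t ∈ [0,T]`, has finite
`α`-Hölder norm on `O`, and `t ↦ f t` is continuous in the Hölder norm. -/
def MemCB {d : ℕ} (O : Set (Euc d)) (α T : ℝ) (f : ℝ → Euc d → ℝ) : Prop :=
  (∀ t ∈ Icc (0:ℝ) T, hNorm O α (f t) ≠ ⊤) ∧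
    ∀ t ∈ Icc (0:ℝ) T, ∀ ε : ℝ≥0∞, 0 < ε → ∃ δ : ℝ, 0 < δ ∧
      ∀ s ∈ Icc (0:ℝ) T, |s - t| < δ →
        hNorm O α (fun r => f s r - f t r) < ε

/-- The distance in `C([0,T] : B_α)`: `sup_{t∈[0,T]} ‖f t - g t‖_α`. -/
def distCB {d : ℕ} (O : Set (Euc d)) (α T : ℝ) (f g : ℝ → Euc d → ℝ) : ℝ≥0∞ :=
  ⨆ t : Icc (0:ℝ) T, hNorm O α (fun r => f t r - g t r)

/-- `u ∈ L²([0,T] × O)`. -/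
def MemL2 {d : ℕ} (O : Set (Euc d)) (T : ℝ) (u : ℝ → Euc d → ℝ) : Prop :=
  MemLp (fun p : ℝ × Euc d => u p.1 p.2) 2
    (((volume : Measure ℝ).restrict (Icc (0:ℝ) T)).prod
      ((volume : Measure (Euc d)).restrict O))

/-- `∫_{[0,T]×O} u²`, as an extended real. -/
def energy {d : ℕ} (O : Set (Euc d)) (T : ℝ) (u : ℝ → Euc d → ℝ) : ℝ≥0∞ :=
  ∫⁻ s in Icc (0:ℝ) T, ∫⁻ q in O, (‖u s q‖₊ : ℝ≥0∞) ^ 2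

/-- `f` solves the controlled equation (CE) with data `(x, u)`:
`f(t,r) = ∫_O G(t,0,r,q) x(q) dq + ∫₀^t∫_O G(t,s,r,q) R(s,q,f(s,q)) dq ds
        + ∫₀^t∫_O G(t,s,r,q) F(s,q,f(s,q)) u(s,q) dq ds` on `[0,T] × O`. -/
def SolvesCE {d : ℕ} (O : Set (Euc d)) (T : ℝ)
    (G : ℝ → ℝ → Euc d → Euc d → ℝ) (R F : ℝ → Euc d → ℝ → ℝ)
    (x : Euc d → ℝ) (u : ℝ → Euc d → ℝ) (f : ℝ → Euc d → ℝ) : Prop :=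
  ∀ t ∈ Icc (0:ℝ) T, ∀ r ∈ O,
    f t r = (∫ q in O, G t 0 r q * x q) +
      (∫ s in Icc (0:ℝ) t, ∫ q in O, G t s r q * R s q (f s q)) +
      (∫ s in Icc (0:ℝ) t, ∫ q in O, G t s r q * F s q (f s q) * u s q)

/-- The rate function `I_x(f)`: the infimum of `(1/2)∫_{[0,T]×O} u²` over all
`u ∈ L²([0,T]×O)` such that `f` solves (CE) with data `(x,u)`. -/
def rateI {d : ℕ} (O : Set (Euc d)) (T : ℝ)
    (G : ℝ → ℝ → Euc d → Euc d → ℝ) (R F : ℝ → Euc d → ℝ → ℝ)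
    (x : Euc d → ℝ) (f : ℝ → Euc d → ℝ) : ℝ≥0∞ :=
  sInf {c : ℝ≥0∞ | ∃ u : ℝ → Euc d → ℝ, MemL2 O T u ∧
    SolvesCE O T G R F x u f ∧ c = 2⁻¹ * energy O T u}

/-! ### Auxiliary lemmas -/

lemma hNorm_sub_rev {d : ℕ} (O : Set (Euc d)) (α : ℝ) (ψ χ : Euc d → ℝ) :
    hNorm O α (fun r => ψ r - χ r) = hNorm O α (fun r => χ r - ψ r) := by
  unfold hNorm
  congr 1
  · refine iSup_congr fun r => ?_
    have : ψ (r:Euc d) - χ r = -(χ (r:Euc d) - ψ r) := by ring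
    simp only [this, nnnorm_neg]
  · refine iSup_congr fun p => ?_
    have : (ψ (p.1:Euc d) - χ p.1) - (ψ (p.2:Euc d) - χ p.2)
        = -((χ (p.1:Euc d) - ψ p.1) - (χ (p.2:Euc d) - ψ p.2)) := by ring
    simp only [this, nnnorm_neg]

lemma nnnorm_le_hNorm {d : ℕ} {O : Set (Euc d)} {α : ℝ} (ψ : Euc d → ℝ)
    {r : Euc d} (hr : r ∈ O) : (‖ψ r‖₊ : ℝ≥0∞) ≤ hNorm O α ψ :=
  le_trans (le_iSup (fun r : O => (‖ψ (r:Euc d)‖₊ : ℝ≥0∞)) ⟨r, hr⟩) le_self_add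

lemma hNorm_triangle {d : ℕ} (O : Set (Euc d)) (α : ℝ) (ψ χ : Euc d → ℝ) :
    hNorm O α ψ ≤ hNorm O α (fun r => ψ r - χ r) + hNorm O α χ := by
  unfold hNorm
  have h1 : (⨆ r : O, (‖ψ r‖₊ : ℝ≥0∞))
      ≤ (⨆ r : O, (‖ψ (r:Euc d) - χ r‖₊ : ℝ≥0∞)) + ⨆ r : O, (‖χ (r:Euc d)‖₊ : ℝ≥0∞) := by
    refine iSup_le fun r => ?_
    calc (‖ψ (r:Euc d)‖₊ : ℝ≥0∞) = (‖(ψ (r:Euc d) - χ r) + χ r‖₊ : ℝ≥0∞) := by rw [sub_add_cancel]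
      _ ≤ (‖ψ (r:Euc d) - χ r‖₊ : ℝ≥0∞) + (‖χ (r:Euc d)‖₊ : ℝ≥0∞) := by
          exact_mod_cast nnnorm_add_le _ _
      _ ≤ _ := add_le_add (le_iSup (fun r : O => (‖ψ (r:Euc d) - χ r‖₊ : ℝ≥0∞)) r)
            (le_iSup (fun r : O => (‖χ (r:Euc d)‖₊ : ℝ≥0∞)) r)
  have h2 : (⨆ p : O × O, (‖ψ (p.1:Euc d) - ψ p.2‖₊ : ℝ≥0∞) / edist (p.1 : Euc d) (p.2 : Euc d) ^ α)
      ≤ (⨆ p : O × O, (‖(ψ (p.1:Euc d) - χ p.1) - (ψ (p.2:Euc d) - χ p.2)‖₊ : ℝ≥0∞)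
            / edist (p.1 : Euc d) (p.2 : Euc d) ^ α)
        + ⨆ p : O × O, (‖χ (p.1:Euc d) - χ p.2‖₊ : ℝ≥0∞) / edist (p.1 : Euc d) (p.2 : Euc d) ^ α := by
    refine iSup_le fun p => ?_
    have h : ψ (p.1:Euc d) - ψ p.2
        = ((ψ (p.1:Euc d) - χ p.1) - (ψ (p.2:Euc d) - χ p.2)) + (χ (p.1:Euc d) - χ p.2) := by ring
    calc (‖ψ (p.1:Euc d) - ψ p.2‖₊ : ℝ≥0∞) / edist (p.1 : Euc d) (p.2 : Euc d) ^ α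
        ≤ ((‖(ψ (p.1:Euc d) - χ p.1) - (ψ (p.2:Euc d) - χ p.2)‖₊ : ℝ≥0∞)
            + (‖χ (p.1:Euc d) - χ p.2‖₊ : ℝ≥0∞)) / edist (p.1 : Euc d) (p.2 : Euc d) ^ α := by
          gcongr
          calc (‖ψ (p.1:Euc d) - ψ p.2‖₊ : ℝ≥0∞)
              = (‖((ψ (p.1:Euc d) - χ p.1) - (ψ (p.2:Euc d) - χ p.2)) + (χ (p.1:Euc d) - χ p.2)‖₊ : ℝ≥0∞) := by
                rw [← h]
            _ ≤ _ := by exact_mod_cast nnnorm_add_le _ _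
      _ = (‖(ψ (p.1:Euc d) - χ p.1) - (ψ (p.2:Euc d) - χ p.2)‖₊ : ℝ≥0∞)
            / edist (p.1 : Euc d) (p.2 : Euc d) ^ α
          + (‖χ (p.1:Euc d) - χ p.2‖₊ : ℝ≥0∞) / edist (p.1 : Euc d) (p.2 : Euc d) ^ α :=
          ENNReal.add_div
      _ ≤ _ := add_le_add
            (le_iSup (fun p : O × O => (‖(ψ (p.1:Euc d) - χ p.1) - (ψ (p.2:Euc d) - χ p.2)‖₊ : ℝ≥0∞)
              / edist (p.1 : Euc d) (p.2 : Euc d) ^ α) p)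
            (le_iSup (fun p : O × O => (‖χ (p.1:Euc d) - χ p.2‖₊ : ℝ≥0∞)
              / edist (p.1 : Euc d) (p.2 : Euc d) ^ α) p)
  calc _ ≤ _ := add_le_add h1 h2
    _ = _ := by ring

lemma holder_le_hNorm {d : ℕ} {O : Set (Euc d)} {α : ℝ} (hα : 0 < α) (ψ : Euc d → ℝ)
    {r q : Euc d} (hr : r ∈ O) (hq : q ∈ O) :
    (‖ψ r - ψ q‖₊ : ℝ≥0∞) ≤ hNorm O α ψ * edist r q ^ α := by
  rcases eq_or_ne (edist r q) 0 with h0 | h0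
  · have : r = q := by rwa [edist_eq_zero] at h0
    simp [this]
  have hne : edist r q ^ α ≠ 0 := by
    simpa using (ENNReal.rpow_pos (pos_iff_ne_zero.2 h0) (edist_ne_top r q)).ne'
  have htop : edist r q ^ α ≠ ⊤ := ENNReal.rpow_ne_top_of_nonneg hα.le (edist_ne_top r q)
  have hdiv : (‖ψ r - ψ q‖₊ : ℝ≥0∞) / edist r q ^ α ≤ hNorm O α ψ :=
    le_trans (le_iSup (fun p : O × O => (‖ψ (p.1:Euc d) - ψ p.2‖₊ : ℝ≥0∞)
      / edist (p.1 : Euc d) (p.2 : Euc d) ^ α) ⟨⟨r, hr⟩, ⟨q, hq⟩⟩) le_add_self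
  rwa [ENNReal.div_le_iff hne htop] at hdiv

lemma lint_rpow {t e : ℝ} (he : -1 < e) :
    ∫⁻ s in Icc 0 t, ENNReal.ofReal ((t - s) ^ e) < ⊤ := by
  rcases le_or_gt t 0 with ht | ht
  · rcases eq_or_lt_of_le ht with rfl | ht'
    · simp [Icc_self]
    · rw [Icc_eq_empty (by linarith)]; simp
  have h1 : IntervalIntegrable (fun x : ℝ => x ^ e) volume 0 t :=
    intervalIntegral.intervalIntegrable_rpow' he
  have h2 : IntervalIntegrable (fun s : ℝ => (t - s) ^ e) volume 0 t := by
    have := (h1.comp_sub_left t)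
    simpa using this.symm
  have h3 : IntegrableOn (fun s : ℝ => (t - s) ^ e) (Icc 0 t) volume := by
    rwa [intervalIntegrable_iff_integrableOn_Icc_of_le ht.le] at h2
  have h4 := h3.2
  refine lt_of_le_of_lt (lintegral_mono fun s => ?_) h4
  exact Real.ofReal_le_enorm _

lemma abs_lt_of_hNorm_lt {d : ℕ} {O : Set (Euc d)} {α : ℝ} {ψ : Euc d → ℝ} {r : Euc d}
    (hr : r ∈ O) {ε : ℝ} (hε : 0 < ε)
    (h : hNorm O α ψ < ENNReal.ofReal ε) : |ψ r| < ε := by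
  have h2 := lt_of_le_of_lt (nnnorm_le_hNorm ψ hr) h
  rw [← enorm_eq_nnnorm, ← ofReal_norm, ENNReal.ofReal_lt_ofReal_iff hε] at h2
  rwa [Real.norm_eq_abs] at h2

lemma abs_le_of_hNorm_le {d : ℕ} {O : Set (Euc d)} {α : ℝ} {ψ : Euc d → ℝ} {r : Euc d}
    (hr : r ∈ O) {c : ℝ≥0∞} (hc : c ≠ ⊤)
    (h : hNorm O α ψ ≤ c) : |ψ r| ≤ c.toReal := by
  have h2 := le_trans (nnnorm_le_hNorm ψ hr) h
  have := ENNReal.toReal_mono hc h2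
  simpa [Real.norm_eq_abs] using this

lemma holder_real {d : ℕ} {O : Set (Euc d)} {α : ℝ} (hα : 0 < α) {ψ : Euc d → ℝ}
    (hψ : hNorm O α ψ ≠ ⊤) {r q : Euc d} (hr : r ∈ O) (hq : q ∈ O) :
    |ψ r - ψ q| ≤ (hNorm O α ψ).toReal * dist r q ^ α := by
  have h := holder_le_hNorm hα ψ hr hq
  have hred : hNorm O α ψ * edist r q ^ α
      = ENNReal.ofReal ((hNorm O α ψ).toReal * dist r q ^ α) := by
    rw [ENNReal.ofReal_mul ENNReal.toReal_nonneg, ENNReal.ofReal_toReal hψ,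
      edist_dist, ENNReal.ofReal_rpow_of_nonneg dist_nonneg hα.le]
  rw [hred, ← enorm_eq_nnnorm, ← ofReal_norm,
    ENNReal.ofReal_le_ofReal_iff (by positivity)] at h
  rwa [Real.norm_eq_abs] at h

lemma memCB_bound {d : ℕ} {O : Set (Euc d)} {α T : ℝ} {f : ℝ → Euc d → ℝ}
    (hf : MemCB O α T f) :
    ∃ M : ℝ, 0 ≤ M ∧ ∀ t ∈ Icc (0:ℝ) T, ∀ q ∈ O, |f t q| ≤ M := by
  classical
  choose! δ hδpos hδ using hf.2
  obtain ⟨s, hsmem, hscov⟩ := isCompact_Icc.elim_nhds_subcover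
    (fun x => Metric.ball x (δ x 1))
    (fun x hx => Metric.ball_mem_nhds _ (hδpos x hx 1 one_pos))
  set M' : ℝ≥0∞ := (s.sup fun x => hNorm O α (f x)) + 1 with hM'
  have hM'top : M' ≠ ⊤ := by
    rw [hM']
    refine ENNReal.add_ne_top.2 ⟨?_, by simp⟩
    refine (Finset.sup_lt_iff (by simp [lt_top_iff_ne_top])).2
      (fun x hx => (hf.1 x (hsmem x hx)).lt_top) |>.ne
  refine ⟨M'.toReal, ENNReal.toReal_nonneg, fun t ht q hq => ?_⟩
  have : hNorm O α (f t) ≤ M' := by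
    obtain ⟨x, hx, htx⟩ := Set.mem_iUnion₂.1 (hscov ht)
    have hball : |t - x| < δ x 1 := by
      rw [← Real.dist_eq]; exact Metric.mem_ball.1 htx
    have h1 : hNorm O α (fun r => f t r - f x r) < 1 :=
      hδ x (hsmem x hx) 1 one_pos t ht hball
    calc hNorm O α (f t) ≤ hNorm O α (fun r => f t r - f x r) + hNorm O α (f x) :=
          hNorm_triangle O α _ _
      _ ≤ 1 + s.sup fun x => hNorm O α (f x) :=
          add_le_add h1.le (Finset.le_sup (f := fun x => hNorm O α (f x)) hx)
      _ = M' := by rw [hM', add_comm]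
  exact abs_le_of_hNorm_le hq hM'top this

lemma memCB_continuousOn {d : ℕ} {O : Set (Euc d)} {α T : ℝ} {f : ℝ → Euc d → ℝ}
    (hα : 0 < α) (hf : MemCB O α T f) :
    ContinuousOn (fun p : ℝ × Euc d => f p.1 p.2) (Icc (0:ℝ) T ×ˢ O) := by
  rw [Metric.continuousOn_iff]
  rintro ⟨t, q₀⟩ ⟨ht, hq₀⟩ ε hε
  obtain ⟨δ₁, hδ₁pos, hδ₁⟩ := hf.2 t ht (ENNReal.ofReal (ε/2))
    (ENNReal.ofReal_pos.2 (by linarith))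
  set C : ℝ := (hNorm O α (f t)).toReal + 1 with hC
  have hCpos : 0 < C := by positivity
  set y : ℝ := ε / (2 * C) with hy
  have hypos : 0 < y := by positivity
  set δ₂ : ℝ := y ^ (1/α) with hδ₂
  have hδ₂pos : 0 < δ₂ := Real.rpow_pos_of_pos hypos _
  refine ⟨min δ₁ δ₂, lt_min hδ₁pos hδ₂pos, ?_⟩
  rintro ⟨s, q⟩ ⟨hs, hq⟩ hdist
  have hle : dist s t < min δ₁ δ₂ ∧ dist q q₀ < min δ₁ δ₂ := by
    rw [Prod.dist_eq] at hdist
    exact ⟨lt_of_le_of_lt (le_max_left _ _) hdist, lt_of_le_of_lt (le_max_right _ _) hdist⟩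
  have h1 : |f s q - f t q| < ε/2 := by
    have := hδ₁ s hs (by rw [← Real.dist_eq]; exact lt_of_lt_of_le hle.1 (min_le_left _ _))
    exact abs_lt_of_hNorm_lt hq (by linarith) this
  have h2 : |f t q - f t q₀| ≤ ε/2 := by
    have hh := holder_real hα (hf.1 t ht) hq hq₀
    have hda : dist q q₀ ^ α ≤ y := by
      calc dist q q₀ ^ α ≤ δ₂ ^ α :=
            Real.rpow_le_rpow dist_nonneg (le_of_lt (lt_of_lt_of_le hle.2 (min_le_right _ _))) hα.le
        _ = y ^ ((1/α) * α) := by rw [hδ₂, ← Real.rpow_mul hypos.le]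
        _ = y := by rw [one_div, inv_mul_cancel₀ hα.ne', Real.rpow_one]
    calc |f t q - f t q₀| ≤ (hNorm O α (f t)).toReal * dist q q₀ ^ α := hh
      _ ≤ C * y := by
          apply mul_le_mul (by rw [hC]; linarith) hda (by positivity) hCpos.le
      _ = ε/2 := by rw [hy]; field_simp
  calc dist (f s q) (f t q₀) = |f s q - f t q₀| := Real.dist_eq _ _
    _ ≤ |f s q - f t q| + |f t q - f t q₀| := abs_sub_le _ _ _
    _ < ε := by linarith

/-- The product measure on `[0,T] × O`. -/
def pm {d : ℕ} (O : Set (Euc d)) (T : ℝ) : Measure (ℝ × Euc d) :=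
  (((volume : Measure ℝ).restrict (Icc (0:ℝ) T)).prod
      ((volume : Measure (Euc d)).restrict O))

section Block3
variable {d : ℕ} {O : Set (Euc d)} {T : ℝ}

lemma kernel_memL2 (hO : MeasurableSet O) {K γ : ℝ} (hK : 0 ≤ K) (hγ : (d : ℝ) < γ)
    {G : ℝ → ℝ → Euc d → Euc d → ℝ}
    (hGmeas : Measurable fun p : (ℝ × ℝ) × Euc d × Euc d => G p.1.1 p.1.2 p.2.1 p.2.2)
    (hGzero : ∀ t s : ℝ, t ≤ s → ∀ r q : Euc d, G t s r q = 0)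
    (hG1 : ∀ t ∈ Icc (0:ℝ) T, ∀ s ∈ Icc (0:ℝ) T, ∀ r ∈ O,
      (∫⁻ q in O, (‖G t s r q‖₊ : ℝ≥0∞)) ≤ ENNReal.ofReal K)
    (hG2 : ∀ s t : ℝ, 0 ≤ s → s < t → t ≤ T → ∀ r ∈ O, ∀ q ∈ O,
      |G t s r q| ≤ K * (t - s) ^ (-(d : ℝ) / γ))
    {Ff : ℝ × Euc d → ℝ} (hFfm : AEStronglyMeasurable Ff (pm O T))
    {B : ℝ} (hB : 0 ≤ B) (hFfb : ∀ s ∈ Icc (0:ℝ) T, ∀ q ∈ O, |Ff (s, q)| ≤ B)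
    {t : ℝ} (ht : t ∈ Icc (0:ℝ) T) {r : Euc d} (hr : r ∈ O) :
    MemLp (fun p : ℝ × Euc d => G t p.1 r p.2 * Ff p) 2 (pm O T) := by
  have hγ0 : (0:ℝ) < γ := lt_of_le_of_lt (Nat.cast_nonneg d) hγ
  have he : (-1:ℝ) < -(d : ℝ) / γ := by
    rw [neg_div, neg_lt_neg_iff]
    exact (div_lt_one hγ0).2 hγ
  have hGsec : Measurable fun p : ℝ × Euc d => G t p.1 r p.2 :=
    hGmeas.comp ((measurable_const.prodMk measurable_fst).prodMk
      (measurable_const.prodMk measurable_snd))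
  have hgm : AEStronglyMeasurable (fun p : ℝ × Euc d => G t p.1 r p.2 * Ff p) (pm O T) :=
    hGsec.aestronglyMeasurable.mul hFfm
  refine ⟨hgm, ?_⟩
  rw [eLpNorm_eq_lintegral_rpow_enorm_toReal two_ne_zero ENNReal.ofNat_ne_top]
  simp only [ENNReal.toReal_ofNat, enorm_eq_nnnorm]
  refine ENNReal.rpow_lt_top_of_nonneg (by positivity) ?_
  have hr2 : ∀ x : ℝ≥0∞, x ^ (2:ℝ) = x * x := fun x => by
    rw [show (2:ℝ) = ((2:ℕ):ℝ) by norm_num, ENNReal.rpow_natCast, sq]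
  have hmeasg : AEMeasurable
      (fun p : ℝ × Euc d => ((‖G t p.1 r p.2 * Ff p‖₊ : ℝ≥0∞)) ^ (2:ℝ)) (pm O T) := by
    exact (hgm.aemeasurable.enorm).pow aemeasurable_const
  unfold pm
  rw [lintegral_prod _ hmeasg]
  set D : ℝ≥0∞ := ENNReal.ofReal K * (ENNReal.ofReal B) ^ 2 * ENNReal.ofReal K with hD
  have hDtop : D ≠ ⊤ :=
    ENNReal.mul_ne_top (ENNReal.mul_ne_top ENNReal.ofReal_ne_top
      (ENNReal.pow_ne_top ENNReal.ofReal_ne_top)) ENNReal.ofReal_ne_top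
  have hbound : ∀ s ∈ Icc (0:ℝ) T,
      (∫⁻ q in O, ((‖G t s r q * Ff (s, q)‖₊ : ℝ≥0∞)) ^ (2:ℝ))
        ≤ D * (Icc 0 t).indicator (fun s => ENNReal.ofReal ((t - s) ^ (-(d:ℝ)/γ))) s := by
    intro s hs
    rcases le_or_gt t s with hts | hst
    · have hz : ∀ q : Euc d, G t s r q = 0 := hGzero t s hts r
      have : (fun q : Euc d => ((‖G t s r q * Ff (s, q)‖₊ : ℝ≥0∞)) ^ (2:ℝ))
          = fun _ => 0 := by
        funext q; rw [hz q]; simp [ENNReal.zero_rpow_of_pos]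
      rw [this]
      simp
    · have hind : (Icc 0 t).indicator (fun s => ENNReal.ofReal ((t - s) ^ (-(d:ℝ)/γ))) s
          = ENNReal.ofReal ((t - s) ^ (-(d:ℝ)/γ)) :=
        Set.indicator_of_mem (Set.mem_Icc.mpr ⟨hs.1, hst.le⟩) _
      rw [hind]
      set GB : ℝ≥0∞ := ENNReal.ofReal (K * (t - s) ^ (-(d:ℝ)/γ)) with hGB
      set FB : ℝ≥0∞ := ENNReal.ofReal B with hFB
      have step1 : (∫⁻ q in O, ((‖G t s r q * Ff (s, q)‖₊ : ℝ≥0∞)) ^ (2:ℝ))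
          ≤ ∫⁻ q in O, (GB * FB ^ 2) * (‖G t s r q‖₊ : ℝ≥0∞) := by
        refine setLIntegral_mono' hO (fun q hq => ?_)
        have hGq : (‖G t s r q‖₊ : ℝ≥0∞) ≤ GB := by
          rw [hGB, ← enorm_eq_nnnorm, Real.enorm_eq_ofReal_abs]
          exact ENNReal.ofReal_le_ofReal (hG2 s t hs.1 hst ht.2 r hr q hq)
        have hFq : (‖Ff (s, q)‖₊ : ℝ≥0∞) ≤ FB := by
          rw [hFB, ← enorm_eq_nnnorm, Real.enorm_eq_ofReal_abs]
          exact ENNReal.ofReal_le_ofReal (hFfb s hs q hq)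
        calc ((‖G t s r q * Ff (s, q)‖₊ : ℝ≥0∞)) ^ (2:ℝ)
            = ((‖G t s r q‖₊ : ℝ≥0∞) * (‖Ff (s, q)‖₊ : ℝ≥0∞))
              * ((‖G t s r q‖₊ : ℝ≥0∞) * (‖Ff (s, q)‖₊ : ℝ≥0∞)) := by
              rw [hr2]; push_cast [nnnorm_mul]; ring
          _ ≤ (GB * FB) * ((‖G t s r q‖₊ : ℝ≥0∞) * FB) := by gcongr
          _ = (GB * FB ^ 2) * (‖G t s r q‖₊ : ℝ≥0∞) := by ring
      have step2 : (∫⁻ q in O, (GB * FB ^ 2) * (‖G t s r q‖₊ : ℝ≥0∞))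
          = (GB * FB ^ 2) * ∫⁻ q in O, (‖G t s r q‖₊ : ℝ≥0∞) :=
        lintegral_const_mul' _ _ (by
          rw [hGB, hFB]
          exact ENNReal.mul_ne_top ENNReal.ofReal_ne_top
            (ENNReal.pow_ne_top ENNReal.ofReal_ne_top))
      calc (∫⁻ q in O, ((‖G t s r q * Ff (s, q)‖₊ : ℝ≥0∞)) ^ (2:ℝ))
          ≤ ∫⁻ q in O, (GB * FB ^ 2) * (‖G t s r q‖₊ : ℝ≥0∞) := step1
        _ = (GB * FB ^ 2) * ∫⁻ q in O, (‖G t s r q‖₊ : ℝ≥0∞) := step2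
        _ ≤ (GB * FB ^ 2) * ENNReal.ofReal K := mul_le_mul_right (hG1 t ht s hs r hr) _
        _ = D * ENNReal.ofReal ((t - s) ^ (-(d:ℝ)/γ)) := by
            rw [hGB, hFB, hD, ENNReal.ofReal_mul hK]; ring
  apply LT.lt.ne
  calc (∫⁻ s in Icc (0:ℝ) T, ∫⁻ q in O, ((‖G t s r q * Ff (s, q)‖₊ : ℝ≥0∞)) ^ (2:ℝ))
      ≤ ∫⁻ s in Icc (0:ℝ) T,
          D * (Icc 0 t).indicator (fun s => ENNReal.ofReal ((t - s) ^ (-(d:ℝ)/γ))) s :=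
        setLIntegral_mono' measurableSet_Icc hbound
    _ = D * ∫⁻ s in Icc (0:ℝ) T,
          (Icc 0 t).indicator (fun s => ENNReal.ofReal ((t - s) ^ (-(d:ℝ)/γ))) s :=
        lintegral_const_mul' _ _ hDtop
    _ < ⊤ := by
        refine ENNReal.mul_lt_top hDtop.lt_top ?_
        rw [lintegral_indicator measurableSet_Icc, Measure.restrict_restrict measurableSet_Icc,
          Set.inter_eq_self_of_subset_left (Icc_subset_Icc le_rfl ht.2)]
        exact lint_rpow he

lemma inner_eq_iterated (hO : MeasurableSet O)
    {t : ℝ} (ht : t ∈ Icc (0:ℝ) T) {g : ℝ × Euc d → ℝ} (hg : MemLp g 2 (pm O T))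
    (hgz : ∀ s : ℝ, t ≤ s → ∀ q : Euc d, g (s, q) = 0)
    (V : Lp ℝ 2 (pm O T)) :
    (inner ℝ (hg.toLp g) V : ℝ)
      = ∫ s in Icc (0:ℝ) t, ∫ q in O, g (s, q) * (V : ℝ × Euc d → ℝ) (s, q) := by
  have hInt : Integrable (fun p : ℝ × Euc d => g p * (V : ℝ × Euc d → ℝ) p) (pm O T) := by
    have h := L2.integrable_inner (𝕜 := ℝ) (hg.toLp g) V
    refine h.congr ?_
    filter_upwards [hg.coeFn_toLp] with p hp
    simp [hp, RCLike.inner_apply, mul_comm]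
  have h1 : (inner ℝ (hg.toLp g) V : ℝ)
      = ∫ p, g p * (V : ℝ × Euc d → ℝ) p ∂(pm O T) := by
    rw [L2.inner_def]
    refine integral_congr_ae ?_
    filter_upwards [hg.coeFn_toLp] with p hp
    simp [hp, RCLike.inner_apply, mul_comm]
  rw [h1]
  unfold pm at hInt ⊢
  rw [integral_prod _ hInt]
  have hzero : ∀ s ∈ Icc (0:ℝ) T, s ∉ Icc (0:ℝ) t →
      (∫ q in O, g (s, q) * (V : ℝ × Euc d → ℝ) (s, q)) = 0 := by
    intro s hs hs'
    have hts : t ≤ s := by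
      by_contra hc; push_neg at hc; exact hs' ⟨hs.1, hc.le⟩
    have : ∀ q : Euc d, g (s, q) * (V : ℝ × Euc d → ℝ) (s, q) = 0 := fun q => by
      rw [hgz s hts q, zero_mul]
    simp [this]
  calc (∫ s in Icc (0:ℝ) T, ∫ q in O, g (s, q) * (V : ℝ × Euc d → ℝ) (s, q))
      = ∫ s in Icc (0:ℝ) T, (Icc (0:ℝ) t).indicator
          (fun s => ∫ q in O, g (s, q) * (V : ℝ × Euc d → ℝ) (s, q)) s := by
        refine setIntegral_congr_fun measurableSet_Icc (fun s hs => ?_)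
        by_cases hm : s ∈ Icc (0:ℝ) t
        · rw [Set.indicator_of_mem hm]
        · rw [Set.indicator_of_notMem hm, hzero s hs hm]
    _ = ∫ s in Icc (0:ℝ) T ∩ Icc (0:ℝ) t,
          ∫ q in O, g (s, q) * (V : ℝ × Euc d → ℝ) (s, q) :=
        setIntegral_indicator measurableSet_Icc
    _ = _ := by rw [Set.inter_eq_self_of_subset_right (Icc_subset_Icc le_rfl ht.2)]; rfl

lemma iterated_congr {t : ℝ} (htT : t ≤ T) {h : ℝ → Euc d → ℝ} {v₁ v₂ : ℝ × Euc d → ℝ}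
    (hv : v₁ =ᵐ[pm O T] v₂) :
    ∫ s in Icc (0:ℝ) t, ∫ q in O, h s q * v₁ (s, q)
      = ∫ s in Icc (0:ℝ) t, ∫ q in O, h s q * v₂ (s, q) := by
  have h1 : ∀ᵐ s ∂((volume : Measure ℝ).restrict (Icc (0:ℝ) T)),
      ∀ᵐ q ∂((volume : Measure (Euc d)).restrict O), v₁ (s, q) = v₂ (s, q) :=
    Measure.ae_ae_of_ae_prod hv
  have h2 : ∀ᵐ s ∂((volume : Measure ℝ).restrict (Icc (0:ℝ) t)),
      ∀ᵐ q ∂((volume : Measure (Euc d)).restrict O), v₁ (s, q) = v₂ (s, q) :=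
    ae_restrict_of_ae_restrict_of_subset (Icc_subset_Icc le_rfl htT) h1
  refine integral_congr_ae ?_
  filter_upwards [h2] with s hs
  refine integral_congr_ae ?_
  filter_upwards [hs] with q hq
  rw [hq]

lemma energy_eq {u : ℝ → Euc d → ℝ}
    (hm : AEStronglyMeasurable (fun p : ℝ × Euc d => u p.1 p.2) (pm O T)) :
    energy O T u = (eLpNorm (fun p : ℝ × Euc d => u p.1 p.2) 2 (pm O T)) ^ 2 := by
  rw [eLpNorm_eq_lintegral_rpow_enorm_toReal two_ne_zero ENNReal.ofNat_ne_top]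
  simp only [ENNReal.toReal_ofNat, enorm_eq_nnnorm]
  rw [← ENNReal.rpow_natCast _ 2, ← ENNReal.rpow_mul]
  norm_num
  have hmeas : AEMeasurable
      (fun p : ℝ × Euc d => ((‖u p.1 p.2‖₊ : ℝ≥0∞)) ^ (2:ℕ)) (pm O T) :=
    (hm.aemeasurable.enorm).pow aemeasurable_const
  unfold pm at hmeas
  unfold energy pm
  exact (lintegral_prod _ hmeas).symm

end Block3

set_option maxHeartbeats 1600000 in
/-- **Lower semicontinuity of `x ↦ I_x(f)`.**
For every `f ∈ C([0,T]:B_α)` the map `x ↦ I_x(f)` is lower semicontinuous on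
`B_α` with respect to the norm `‖·‖_α` (phrased sequentially, which is equivalent
in metric spaces): if `xₙ → x` in `B_α` then `I_x(f) ≤ liminf_n I_{xₙ}(f)`. -/
theorem stmt_9
    {d : ℕ} (O : Set (Euc d)) (hOopen : IsOpen O) (hObdd : Bornology.IsBounded O)
    (T K γ : ℝ) (hT : 0 < T) (hK : 0 < K) (hγ : (d : ℝ) < γ)
    (G : ℝ → ℝ → Euc d → Euc d → ℝ)
    (hGmeas : Measurable fun p : (ℝ × ℝ) × Euc d × Euc d => G p.1.1 p.1.2 p.2.1 p.2.2)
    (hGzero : ∀ t s : ℝ, t ≤ s → ∀ r q : Euc d, G t s r q = 0)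
    (hG1 : ∀ t ∈ Icc (0:ℝ) T, ∀ s ∈ Icc (0:ℝ) T, ∀ r ∈ O,
      (∫⁻ q in O, (‖G t s r q‖₊ : ℝ≥0∞)) ≤ ENNReal.ofReal K)
    (hG2 : ∀ s t : ℝ, 0 ≤ s → s < t → t ≤ T → ∀ r ∈ O, ∀ q ∈ O,
      |G t s r q| ≤ K * (t - s) ^ (-(d : ℝ) / γ))
    (hG3 : ∀ β : ℝ, 0 < β → β < (γ - d) / (2 * γ) →
      ∀ s t₁ t₂ : ℝ, 0 ≤ s → s < t₁ → t₁ ≤ t₂ → t₂ ≤ T →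
      ∀ r₁ ∈ O, ∀ r₂ ∈ O, ∀ q ∈ O,
      |G t₁ s r₁ q - G t₂ s r₂ q| ≤
        K * ((t₂ - t₁) ^ (1 - (d : ℝ) / γ) * (t₁ - s)⁻¹ +
          ‖r₁ - r₂‖ ^ (2 * β) * (t₁ - s) ^ (-((d : ℝ) + 2 * β) / γ)))
    (R F : ℝ → Euc d → ℝ → ℝ)
    (hRmeas : Measurable fun p : ℝ × Euc d × ℝ => R p.1 p.2.1 p.2.2)
    (hFmeas : Measurable fun p : ℝ × Euc d × ℝ => F p.1 p.2.1 p.2.2)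
    (hLip : ∀ t ∈ Icc (0:ℝ) T, ∀ r ∈ O, ∀ x y : ℝ,
      |R t r x - R t r y| + |F t r x - F t r y| ≤ K * |x - y|)
    (hGrowth : ∀ t ∈ Icc (0:ℝ) T, ∀ r ∈ O, ∀ x : ℝ,
      |R t r x| + |F t r x| ≤ K * (1 + |x|))
    (α : ℝ) (hα0 : 0 < α) (hαlt : α < (γ - (d : ℝ)) / (2 * γ))
    (hA2a : ∀ ξ : Euc d → ℝ, hNorm O α ξ ≠ ⊤ →
      MemCB O α T (fun t r => ∫ q in O, G t 0 r q * ξ q))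
    (hA2b : ∀ ξ : Euc d → ℝ, hNorm O α ξ ≠ ⊤ → ∀ ε : ℝ≥0∞, 0 < ε →
      ∃ δ : ℝ≥0∞, 0 < δ ∧ ∀ ξ' : Euc d → ℝ, hNorm O α ξ' ≠ ⊤ →
        hNorm O α (fun r => ξ r - ξ' r) < δ →
        distCB O α T (fun t r => ∫ q in O, G t 0 r q * ξ q)
          (fun t r => ∫ q in O, G t 0 r q * ξ' q) < ε)
    (f : ℝ → Euc d → ℝ) (hf : MemCB O α T f)
    (x : Euc d → ℝ) (hx : hNorm O α x ≠ ⊤)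
    (xn : ℕ → Euc d → ℝ) (hxn : ∀ n, hNorm O α (xn n) ≠ ⊤)
    (hconv : Tendsto (fun n => hNorm O α (fun r => xn n r - x r)) atTop (𝓝 0)) :
    rateI O T G R F x f ≤ Filter.liminf (fun n => rateI O T G R F (xn n) f) atTop := by
  classical
  have hO : MeasurableSet O := hOopen.measurableSet
  refine ENNReal.le_of_forall_pos_le_add fun ε hε hLlt => ?_
  set L := Filter.liminf (fun n => rateI O T G R F (xn n) f) Filter.atTop with hLdef
  have hLtop : L ≠ ⊤ := hLlt.ne
  have hfreq : ∃ᶠ n in atTop, rateI O T G R F (xn n) f < L + ε := by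
    have h := ENNReal.lt_add_right hLtop (show (ε:ℝ≥0∞) ≠ 0 by exact_mod_cast hε.ne')
    exact Filter.frequently_lt_of_liminf_lt (by isBoundedDefault) (hLdef ▸ h)
  obtain ⟨φ, hφmono, hφ⟩ := Filter.extraction_of_frequently_atTop hfreq
  have hsel : ∀ k : ℕ, ∃ u : ℝ → Euc d → ℝ, MemL2 O T u ∧
      SolvesCE O T G R F (xn (φ k)) u f ∧ 2⁻¹ * energy O T u < L + ε := by
    intro k
    have h := hφ k
    unfold rateI at h
    obtain ⟨c, hc, hlt⟩ := sInf_lt_iff.mp h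
    obtain ⟨u, h1, h2, hceq⟩ := hc
    rw [hceq] at hlt
    exact ⟨u, h1, h2, hlt⟩
  choose u hu1 hu2 hu3 using hsel
  -- uniform energy bound
  set Eb : ℝ≥0∞ := 2 * (L + ε) with hEb
  have hLε : (L + ε) ≠ ⊤ := ENNReal.add_ne_top.2 ⟨hLtop, ENNReal.coe_ne_top⟩
  have hEbtop : Eb ≠ ⊤ := by
    rw [hEb]; exact ENNReal.mul_ne_top (by norm_num) hLε
  have henergy : ∀ k, energy O T (u k) ≤ Eb := by
    intro k
    calc energy O T (u k) = 2 * (2⁻¹ * energy O T (u k)) := by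
          rw [← mul_assoc, ENNReal.mul_inv_cancel two_ne_zero (by norm_num), one_mul]
      _ ≤ 2 * (L + ε) := by gcongr; exact (hu3 k).le
      _ = Eb := hEb.symm
  -- facts about f
  obtain ⟨M, hM0, hMb⟩ := memCB_bound hf
  have hfc := memCB_continuousOn hα0 hf
  have hfm : AEStronglyMeasurable (fun p : ℝ × Euc d => f p.1 p.2) (pm O T) := by
    unfold pm
    rw [Measure.prod_restrict]
    exact ContinuousOn.aestronglyMeasurable hfc (measurableSet_Icc.prod hO)
  set Ff : ℝ × Euc d → ℝ := fun p => F p.1 p.2 (f p.1 p.2) with hFfdef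
  have hFfm : AEStronglyMeasurable Ff (pm O T) := by
    have hcomp : AEMeasurable (fun p : ℝ × Euc d => (p.1, p.2, f p.1 p.2)) (pm O T) :=
      measurable_fst.aemeasurable.prodMk
        (measurable_snd.aemeasurable.prodMk hfm.aemeasurable)
    exact (hFmeas.comp_aemeasurable hcomp).aestronglyMeasurable
  have hBnn : 0 ≤ K * (1 + M) := by positivity
  have hFfb : ∀ s ∈ Icc (0:ℝ) T, ∀ q ∈ O, |Ff (s, q)| ≤ K * (1 + M) := by
    intro s hs q hq
    have h1 := hGrowth s hs q hq (f s q)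
    have h2 := hMb s hs q hq
    have h3 : |F s q (f s q)| ≤ K * (1 + |f s q|) := by
      have := abs_nonneg (R s q (f s q)); linarith
    calc |Ff (s, q)| = |F s q (f s q)| := rfl
      _ ≤ K * (1 + |f s q|) := h3
      _ ≤ K * (1 + M) := by
          have : |f s q| ≤ M := h2
          nlinarith [hK.le]
  -- the Lp elements
  set U : ℕ → Lp ℝ 2 (pm O T) :=
    fun k => (hu1 k).toLp (fun p : ℝ × Euc d => u k p.1 p.2) with hUdef
  set Rb : ℝ := (Eb ^ (1/2 : ℝ)).toReal with hRb
  have hEbrt : Eb ^ (1/2:ℝ) ≠ ⊤ := ENNReal.rpow_ne_top_of_nonneg (by norm_num) hEbtop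
  have hUnorm : ∀ k, ‖U k‖ ≤ Rb := by
    intro k
    have he2 : energy O T (u k)
        = (eLpNorm (fun p : ℝ × Euc d => u k p.1 p.2) 2 (pm O T)) ^ 2 :=
      energy_eq (hu1 k).aestronglyMeasurable
    have hsq : (eLpNorm (fun p : ℝ × Euc d => u k p.1 p.2) 2 (pm O T)) ^ 2 ≤ Eb := by
      rw [← he2]; exact henergy k
    have hen : eLpNorm (fun p : ℝ × Euc d => u k p.1 p.2) 2 (pm O T) ≤ Eb ^ (1/2:ℝ) := by
      calc eLpNorm (fun p : ℝ × Euc d => u k p.1 p.2) 2 (pm O T)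
          = ((eLpNorm (fun p : ℝ × Euc d => u k p.1 p.2) 2 (pm O T)) ^ (2:ℕ)) ^ (1/2:ℝ) := by
            rw [← ENNReal.rpow_natCast _ 2, ← ENNReal.rpow_mul]; norm_num
        _ ≤ Eb ^ (1/2:ℝ) := ENNReal.rpow_le_rpow hsq (by norm_num)
    rw [hUdef]
    exact (Lp.norm_toLp _ _).trans_le (ENNReal.toReal_mono hEbrt hen)
  -- weak compactness
  set Wd : ℕ → WeakDual ℝ (Lp ℝ 2 (pm O T)) :=
    fun k => StrongDual.toWeakDual (InnerProductSpace.toDual ℝ _ (U k)) with hWddef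
  have hWmem : ∀ k, Wd k ∈ (WeakDual.toStrongDual ⁻¹' Metric.closedBall 0 Rb) := by
    intro k
    simp only [Set.mem_preimage, Metric.mem_closedBall, dist_zero_right]
    calc ‖WeakDual.toStrongDual (Wd k)‖
        = ‖InnerProductSpace.toDual ℝ _ (U k)‖ := rfl
      _ = ‖U k‖ := (InnerProductSpace.toDual ℝ _).norm_map (U k)
      _ ≤ Rb := hUnorm k
  have hcpt := WeakDual.isCompact_closedBall (𝕜 := ℝ) (E := Lp ℝ 2 (pm O T)) 0 Rb
  haveI : (Filter.map Wd atTop).NeBot := Filter.map_neBot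
  have hle : Filter.map Wd atTop
      ≤ Filter.principal (WeakDual.toStrongDual ⁻¹' Metric.closedBall 0 Rb) :=
    Filter.le_principal_iff.2 (Filter.mem_map.mpr (Filter.Eventually.of_forall hWmem))
  obtain ⟨ℓ, hℓmem, hℓcl⟩ := hcpt.exists_clusterPt hle
  set Uoo : Lp ℝ 2 (pm O T) :=
    (InnerProductSpace.toDual ℝ _).symm (WeakDual.toStrongDual ℓ) with hUoodef
  have hUoonorm : ‖Uoo‖ ≤ Rb := by
    have h1 : ‖WeakDual.toStrongDual ℓ‖ ≤ Rb := by
      have := hℓmem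
      simpa only [Set.mem_preimage, Metric.mem_closedBall, dist_zero_right] using this
    calc ‖Uoo‖ = ‖WeakDual.toStrongDual ℓ‖ :=
          (InnerProductSpace.toDual ℝ _).symm.norm_map _
      _ ≤ Rb := h1
  -- cluster values
  have hclust : ∀ (g : Lp ℝ 2 (pm O T)) (η : ℝ), 0 < η →
      ∃ᶠ k in atTop, |(inner ℝ (U k) g : ℝ) - (inner ℝ Uoo g : ℝ)| < η := by
    intro g η hη
    have hev : Continuous fun ψ : WeakDual ℝ (Lp ℝ 2 (pm O T)) => ψ g :=
      WeakDual.eval_continuous g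
    have hmc : MapClusterPt ℓ atTop Wd := hℓcl
    have hmc2 := hmc.continuousAt_comp hev.continuousAt
    have hfr := (mapClusterPt_iff_frequently.1 hmc2) (Metric.ball (ℓ g) η) (Metric.ball_mem_nhds _ hη)
    refine hfr.mono fun k hk => ?_
    simp only [Function.comp_apply] at hk
    have h1 : Wd k g = (inner ℝ (U k) g : ℝ) := by
      rw [hWddef]
      exact InnerProductSpace.toDual_apply_apply
    have h2 : ℓ g = (inner ℝ Uoo g : ℝ) := by
      have : (inner ℝ Uoo g : ℝ) = (InnerProductSpace.toDual ℝ _ Uoo) g :=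
        (InnerProductSpace.toDual_apply_apply).symm
      rw [this, hUoodef, LinearIsometryEquiv.apply_symm_apply]
      rfl
    rw [Metric.mem_ball, Real.dist_eq, h1, h2] at hk
    exact hk
  -- convergence of the initial-data term
  have hA : ∀ η : ℝ, 0 < η → ∀ᶠ m in atTop, ∀ t ∈ Icc (0:ℝ) T, ∀ r ∈ O,
      |(∫ q in O, G t 0 r q * x q) - ∫ q in O, G t 0 r q * xn m q| < η := by
    intro η hη
    obtain ⟨δ, hδpos, hδ⟩ := hA2b x hx (ENNReal.ofReal η) (ENNReal.ofReal_pos.2 hη)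
    have hev : ∀ᶠ m in atTop, hNorm O α (fun r => xn m r - x r) < δ :=
      hconv.eventually_lt_const hδpos
    refine hev.mono fun m hm t ht r hr => ?_
    have h1 : hNorm O α (fun r => x r - xn m r) < δ := by
      rw [hNorm_sub_rev]; exact hm
    have h2 := hδ (xn m) (hxn m) h1
    have h3 : hNorm O α (fun r' => (∫ q in O, G t 0 r' q * x q)
        - ∫ q in O, G t 0 r' q * xn m q) < ENNReal.ofReal η :=
      lt_of_le_of_lt (le_iSup (fun tt : Icc (0:ℝ) T => hNorm O α
        (fun r' => (∫ q in O, G (tt:ℝ) 0 r' q * x q)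
          - ∫ q in O, G (tt:ℝ) 0 r' q * xn m q)) ⟨t, ht⟩) h2
    exact abs_lt_of_hNorm_lt hr hη h3
  -- the kernel test functions
  have hkmem : ∀ t, t ∈ Icc (0:ℝ) T → ∀ r, r ∈ O →
      MemLp (fun p : ℝ × Euc d => G t p.1 r p.2 * Ff p) 2 (pm O T) :=
    fun t ht r hr => kernel_memL2 hO hK.le hγ hGmeas hGzero hG1 hG2 hFfm hBnn hFfb ht hr
  have hthird : ∀ t, ∀ ht : t ∈ Icc (0:ℝ) T, ∀ r, ∀ hr : r ∈ O, ∀ V : Lp ℝ 2 (pm O T),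
      (inner ℝ ((hkmem t ht r hr).toLp _) V : ℝ)
        = ∫ s in Icc (0:ℝ) t, ∫ q in O,
            G t s r q * F s q (f s q) * (V : ℝ × Euc d → ℝ) (s, q) := by
    intro t ht r hr V
    exact inner_eq_iterated hO ht (hkmem t ht r hr)
      (fun s hts q => by simp [hGzero t s hts]) V
  -- the limit control
  set uh : ℝ → Euc d → ℝ := fun s q => (Uoo : ℝ × Euc d → ℝ) (s, q) with huhdef
  have huhmem : MemL2 O T uh := Lp.memLp Uoo
  have hsolves : SolvesCE O T G R F x uh f := by
    intro t ht r hr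
    have hthirdUoo : (∫ s in Icc (0:ℝ) t, ∫ q in O, G t s r q * F s q (f s q) * uh s q)
        = (inner ℝ ((hkmem t ht r hr).toLp _) Uoo : ℝ) := (hthird t ht r hr Uoo).symm
    rw [hthirdUoo]
    by_contra hne
    set c : ℝ := f t r - ((∫ q in O, G t 0 r q * x q)
      + (∫ s in Icc (0:ℝ) t, ∫ q in O, G t s r q * R s q (f s q))
      + (inner ℝ ((hkmem t ht r hr).toLp _) Uoo : ℝ)) with hc
    have hcne : c ≠ 0 := sub_ne_zero.2 hne
    have hcpos : 0 < |c| := abs_pos.2 hcne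
    have hfr := hclust ((hkmem t ht r hr).toLp _) (|c|/2) (by positivity)
    have hevA := (hφmono.tendsto_atTop).eventually (hA (|c|/2) (by positivity))
    obtain ⟨k, hk1, hk2⟩ := (hfr.and_eventually hevA).exists
    have hCE := hu2 k t ht r hr
    have h3 : (∫ s in Icc (0:ℝ) t, ∫ q in O, G t s r q * F s q (f s q) * u k s q)
        = (inner ℝ ((hkmem t ht r hr).toLp _) (U k) : ℝ) := by
      rw [hthird t ht r hr (U k)]
      exact iterated_congr (O := O) ht.2 (h := fun s q => G t s r q * F s q (f s q))
        (v₁ := fun p : ℝ × Euc d => u k p.1 p.2) (v₂ := ((U k) : ℝ × Euc d → ℝ))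
        ((hu1 k).coeFn_toLp.symm)
    rw [h3] at hCE
    have hk2' := hk2 t ht r hr
    have hIk : |(inner ℝ ((hkmem t ht r hr).toLp _) (U k) : ℝ)
        - (inner ℝ ((hkmem t ht r hr).toLp _) Uoo : ℝ)| < |c|/2 := by
      rw [real_inner_comm (U k), real_inner_comm Uoo]
      exact hk1
    have hsplit : c = ((∫ q in O, G t 0 r q * xn (φ k) q) - (∫ q in O, G t 0 r q * x q))
        + ((inner ℝ ((hkmem t ht r hr).toLp _) (U k) : ℝ)
            - (inner ℝ ((hkmem t ht r hr).toLp _) Uoo : ℝ)) := by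
      rw [hc, hCE]; ring
    have hcon : |c| < |c| := by
      calc |c| ≤ |(∫ q in O, G t 0 r q * xn (φ k) q) - (∫ q in O, G t 0 r q * x q)|
            + |(inner ℝ ((hkmem t ht r hr).toLp _) (U k) : ℝ)
                - (inner ℝ ((hkmem t ht r hr).toLp _) Uoo : ℝ)| := by
            rw [hsplit]; exact abs_add_le _ _
        _ < |c|/2 + |c|/2 := add_lt_add (by rw [abs_sub_comm]; exact hk2') hIk
        _ = |c| := by ring
    exact lt_irrefl _ hcon
  -- energy of the limit control
  have huhm : AEStronglyMeasurable (fun p : ℝ × Euc d => uh p.1 p.2) (pm O T) :=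
    huhmem.aestronglyMeasurable
  have henergyuh : energy O T uh ≤ Eb := by
    rw [energy_eq huhm]
    have h1 : eLpNorm (fun p : ℝ × Euc d => uh p.1 p.2) 2 (pm O T)
        = ENNReal.ofReal ‖Uoo‖ := by
      rw [Lp.norm_def, ENNReal.ofReal_toReal (Lp.eLpNorm_ne_top Uoo)]
    rw [h1]
    calc (ENNReal.ofReal ‖Uoo‖) ^ 2 ≤ (ENNReal.ofReal Rb) ^ 2 := by
          gcongr
      _ = (Eb ^ (1/2:ℝ)) ^ 2 := by rw [hRb, ENNReal.ofReal_toReal hEbrt]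
      _ = Eb := by
          rw [← ENNReal.rpow_natCast _ 2, ← ENNReal.rpow_mul]; norm_num
  -- conclusion
  have hmemset : (2⁻¹ * energy O T uh) ∈ {c : ℝ≥0∞ | ∃ u' : ℝ → Euc d → ℝ,
      MemL2 O T u' ∧ SolvesCE O T G R F x u' f ∧ c = 2⁻¹ * energy O T u'} :=
    ⟨uh, huhmem, hsolves, rfl⟩
  calc rateI O T G R F x f ≤ 2⁻¹ * energy O T uh := sInf_le hmemset
    _ ≤ 2⁻¹ * Eb := by gcongr
    _ = L + ε := by
        rw [hEb, ← mul_assoc, ENNReal.inv_mul_cancel two_ne_zero (by norm_num), one_mul]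

end
end

section
/- For every C₀ < ∞ and M < ∞ there exists a constant C < ∞, depending only on C₀, M, K, T, γ, d and the Lebesgue measure of O, with the following property: whenever x : O → ℝ is measurable with sup_{r∈O}|x(r)| ≤ C₀, u ∈ L²([0,T]×O) satisfies ∫_{[0,T]×O} u² ≤ M, and f : [0,T]×O → ℝ is a bounded measurable function solving (CE) with data (x,u), then sup_{(t,r)∈[0,T]×O} |f(t,r)| ≤ C. -/
open MeasureTheory Filter Set Topology
open scoped ENNReal NNReal

noncomputable section

lemma cs_lintegral {α : Type*} [MeasurableSpace α] (μ : Measure α)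
    {f g : α → ℝ≥0∞} (hf : AEMeasurable f μ) (hg : AEMeasurable g μ) :
    ∫⁻ x, f x * g x ∂μ ≤
      ((∫⁻ x, f x ^ 2 ∂μ) ^ (1/2 : ℝ)) * ((∫⁻ x, g x ^ 2 ∂μ) ^ (1/2 : ℝ)) := by
  have hpq : (2:ℝ).HolderConjugate 2 := Real.holderConjugate_iff.2 ⟨one_lt_two, by norm_num⟩
  have h := ENNReal.lintegral_mul_le_Lp_mul_Lq μ hpq hf hg
  simp only [Pi.mul_apply] at h
  calc ∫⁻ x, f x * g x ∂μ
      ≤ (∫⁻ x, f x ^ (2:ℝ) ∂μ) ^ (1/2 : ℝ) * (∫⁻ x, g x ^ (2:ℝ) ∂μ) ^ (1/2 : ℝ) := h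
    _ = _ := by
        congr 2 <;> refine lintegral_congr fun x => ?_ <;>
          rw [show (2:ℝ) = ((2:ℕ):ℝ) by norm_num, ENNReal.rpow_natCast]

lemma sq_rpow_half (x : ℝ≥0∞) : (x ^ (1/2:ℝ))^2 = x := by
  rw [← ENNReal.rpow_natCast (x ^ (1/2:ℝ)) 2, ← ENNReal.rpow_mul]
  norm_num

lemma self_le_sq_rpow_half (x : ℝ≥0∞) : x = (x^2) ^ (1/2:ℝ) := by
  rw [← ENNReal.rpow_natCast x 2, ← ENNReal.rpow_mul]
  norm_num

lemma sq_add_le (a b : ℝ≥0∞) : (a + b)^2 ≤ 4*a^2 + 4*b^2 := by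
  rcases le_total a b with h | h
  · calc (a+b)^2 ≤ (b+b)^2 := by gcongr
      _ = 4*b^2 := by ring
      _ ≤ 4*a^2 + 4*b^2 := le_add_self
  · calc (a+b)^2 ≤ (a+a)^2 := by gcongr
      _ = 4*a^2 := by ring
      _ ≤ 4*a^2 + 4*b^2 := le_self_add

lemma sq_add3_le (a b c : ℝ≥0∞) : (a+b+c)^2 ≤ 16*a^2 + 16*b^2 + 16*c^2 := by
  calc (a+b+c)^2 = (a + (b+c))^2 := by ring
    _ ≤ 4*a^2 + 4*(b+c)^2 := sq_add_le _ _
    _ ≤ 4*a^2 + 4*(4*b^2 + 4*c^2) := by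
        exact add_le_add le_rfl (mul_le_mul_right (sq_add_le _ _) 4)
    _ = 4*a^2 + 16*b^2 + 16*c^2 := by ring
    _ ≤ 16*a^2 + 16*b^2 + 16*c^2 := by
        gcongr <;> norm_num





lemma kernel_lintegral_le {α t a : ℝ} (hα0 : 0 ≤ α) (hα1 : α < 1)
    (h0a : 0 ≤ a) (hat : a ≤ t) :
    ∫⁻ s in Icc a t, ENNReal.ofReal ((t - s) ^ (-α)) ≤
      ENNReal.ofReal ((t-a)^(1-α) / (1-α)) := by
  have h1α : (0:ℝ) < 1 - α := by linarith
  have hii : IntervalIntegrable (fun s => (t - s) ^ (-α)) volume a t := by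
    have h := (intervalIntegral.intervalIntegrable_rpow'
      (show (-1:ℝ) < -α by linarith) (a := t - a) (b := t - t)).comp_sub_left t
    simpa using h
  have hint : IntegrableOn (fun s => (t - s) ^ (-α)) (Icc a t) volume := by
    rw [integrableOn_Icc_iff_integrableOn_Ioc]
    exact (intervalIntegrable_iff_integrableOn_Ioc_of_le hat).1 hii
  have hnn : 0 ≤ᵐ[volume.restrict (Icc a t)] fun s => (t - s) ^ (-α) := by
    refine (ae_restrict_iff' measurableSet_Icc).2 (ae_of_all _ fun s hs => ?_)
    exact Real.rpow_nonneg (by linarith [hs.2]) _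
  rw [← ofReal_integral_eq_lintegral_ofReal hint hnn]
  refine ENNReal.ofReal_le_ofReal (le_of_eq ?_)
  rw [integral_Icc_eq_integral_Ioc, ← intervalIntegral.integral_of_le hat]
  have hcs : (∫ s in a..t, (t - s) ^ (-α)) = ∫ s in (t-t)..(t-a), s ^ (-α) :=
    intervalIntegral.integral_comp_sub_left (fun s => s ^ (-α)) t
  rw [hcs]
  simp only [sub_self]
  rw [integral_rpow (Or.inl (by linarith : (-1:ℝ) < -α))]
  rw [Real.zero_rpow (by linarith : -α + 1 ≠ 0)]
  rw [show -α + 1 = 1 - α by ring]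
  ring

lemma gronwall {Ψ : ℝ → ℝ≥0∞} {a b W : ℝ≥0∞} (ha : a ≠ ∞) (hb : b ≠ ∞) (hW : W ≠ ∞)
    {T : ℝ} (hT : 0 ≤ T)
    (hbdd : ∀ t ∈ Icc (0:ℝ) T, Ψ t ≤ W)
    (hrec : ∀ t ∈ Icc (0:ℝ) T, Ψ t ≤ a + b * ∫⁻ s in Icc (0:ℝ) t, Ψ s) :
    ∀ t ∈ Icc (0:ℝ) T, Ψ t ≤ a * ENNReal.ofReal (Real.exp (b.toReal * T)) := by
  set β := b.toReal with hβdef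
  have hβ0 : 0 ≤ β := ENNReal.toReal_nonneg
  have key : ∀ n : ℕ, ∀ t ∈ Icc (0:ℝ) T,
      Ψ t ≤ a * ENNReal.ofReal (Real.exp (β * t))
        + W * ENNReal.ofReal ((β*t)^n / n.factorial) := by
    intro n
    induction n with
    | zero =>
      intro t ht
      have h1 : ((β*t)^0 / (Nat.factorial 0) : ℝ) = 1 := by norm_num
      rw [h1, ENNReal.ofReal_one, mul_one]
      calc Ψ t ≤ W := hbdd t ht
        _ ≤ a * ENNReal.ofReal (Real.exp (β * t)) + W := le_add_self
    | succ n ih =>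
      intro t ht
      obtain ⟨ht0, htT⟩ := ht
      by_cases hb0 : b = 0
      · have h := hrec t ⟨ht0, htT⟩
        rw [hb0, zero_mul, add_zero] at h
        refine h.trans ?_
        have h2 : (1:ℝ≥0∞) ≤ ENNReal.ofReal (Real.exp (β * t)) := by
          rw [show (1:ℝ≥0∞) = ENNReal.ofReal 1 by simp]
          refine ENNReal.ofReal_le_ofReal ?_
          have := Real.add_one_le_exp (β*t)
          nlinarith [mul_nonneg hβ0 ht0]
        calc a = a * 1 := (mul_one a).symm
          _ ≤ a * ENNReal.ofReal (Real.exp (β * t)) := mul_le_mul_right h2 a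
          _ ≤ _ := le_self_add
      · have hβpos : 0 < β := ENNReal.toReal_pos hb0 hb
        have hbβ : b = ENNReal.ofReal β := (ENNReal.ofReal_toReal hb).symm
        have hci : IntegrableOn (fun s => Real.exp (β*s)) (Icc (0:ℝ) t) volume :=
          Continuous.integrableOn_Icc (Real.continuous_exp.comp (continuous_const.mul continuous_id))
        have hE : ∫⁻ s in Icc (0:ℝ) t, ENNReal.ofReal (Real.exp (β*s)) =
            ENNReal.ofReal (β⁻¹ * (Real.exp (β*t) - 1)) := by
          rw [← ofReal_integral_eq_lintegral_ofReal hci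
            (ae_of_all _ fun s => (Real.exp_pos _).le)]
          congr 1
          rw [integral_Icc_eq_integral_Ioc, ← intervalIntegral.integral_of_le ht0]
          rw [intervalIntegral.integral_comp_mul_left (fun s => Real.exp s) hβpos.ne']
          simp [integral_exp, smul_eq_mul]
        have hpi : IntegrableOn (fun s => (β*s)^n / n.factorial) (Icc (0:ℝ) t) volume :=
          Continuous.integrableOn_Icc
            (((continuous_const.mul continuous_id).pow n).div_const _)
        have hP : ∫⁻ s in Icc (0:ℝ) t, ENNReal.ofReal ((β*s)^n / n.factorial) =
            ENNReal.ofReal (β^n / n.factorial * (t^(n+1)/(n+1))) := by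
          rw [← ofReal_integral_eq_lintegral_ofReal hpi ?hnn]
          case hnn =>
            refine (ae_restrict_iff' measurableSet_Icc).2 (ae_of_all _ fun s hs => ?_)
            have h0s : 0 ≤ s := hs.1
            positivity
          congr 1
          rw [integral_Icc_eq_integral_Ioc, ← intervalIntegral.integral_of_le ht0]
          have hmp : ∀ s : ℝ, (β*s)^n / n.factorial = β^n / n.factorial * s^n := by
            intro s; rw [mul_pow]; ring
          simp_rw [hmp]
          rw [intervalIntegral.integral_const_mul, integral_pow]
          simp
        have hfin : a + (a * ENNReal.ofReal (Real.exp (β*t) - 1)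
              + W * ENNReal.ofReal ((β*t)^(n+1) / (n+1).factorial))
            = a * ENNReal.ofReal (Real.exp (β*t))
              + W * ENNReal.ofReal ((β*t)^(n+1) / (n+1).factorial) := by
          have hexp1 : (1:ℝ) ≤ Real.exp (β*t) := by
            have := Real.add_one_le_exp (β*t); nlinarith [mul_nonneg hβ0 ht0]
          have h3 : ENNReal.ofReal (Real.exp (β*t)) =
              ENNReal.ofReal (Real.exp (β*t) - 1) + 1 := by
            rw [← ENNReal.ofReal_one, ← ENNReal.ofReal_add (by linarith) zero_le_one]
            norm_num
          rw [h3, mul_add, mul_one]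
          ring
        calc Ψ t ≤ a + b * ∫⁻ s in Icc (0:ℝ) t, Ψ s := hrec t ⟨ht0, htT⟩
          _ ≤ a + b * ∫⁻ s in Icc (0:ℝ) t,
              (a * ENNReal.ofReal (Real.exp (β*s))
                + W * ENNReal.ofReal ((β*s)^n / n.factorial)) := by
              refine add_le_add le_rfl (mul_le_mul_right ?_ b)
              refine setLIntegral_mono' measurableSet_Icc fun s hs => ?_
              exact ih s ⟨hs.1, hs.2.trans htT⟩
          _ = a + b * (a * ENNReal.ofReal (β⁻¹ * (Real.exp (β*t) - 1))
                + W * ENNReal.ofReal (β^n / n.factorial * (t^(n+1)/(n+1)))) := by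
              rw [lintegral_add_left (by fun_prop)]
              rw [lintegral_const_mul' _ _ ha, lintegral_const_mul' _ _ hW, hE, hP]
          _ = a + (a * (b * ENNReal.ofReal (β⁻¹ * (Real.exp (β*t) - 1)))
                + W * (b * ENNReal.ofReal (β^n / n.factorial * (t^(n+1)/(n+1))))) := by
              ring
          _ = a + (a * ENNReal.ofReal (Real.exp (β*t) - 1)
                + W * ENNReal.ofReal ((β*t)^(n+1) / (n+1).factorial)) := by
              rw [hbβ]
              rw [← ENNReal.ofReal_mul hβ0, ← ENNReal.ofReal_mul hβ0]
              congr 3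
              · field_simp
              · rw [Nat.factorial_succ, mul_pow]
                have hnf : ((n.factorial : ℝ)) ≠ 0 := by positivity
                push_cast
                field_simp
                ring
          _ = _ := hfin
  intro t ht
  have h1 : ∀ n : ℕ, Ψ t ≤ a * ENNReal.ofReal (Real.exp (β * T))
      + W * ENNReal.ofReal ((β*T)^n / n.factorial) := by
    intro n
    refine (key n t ht).trans (add_le_add ?_ ?_)
    · exact mul_le_mul_right (ENNReal.ofReal_le_ofReal (Real.exp_le_exp.2
        (mul_le_mul_of_nonneg_left ht.2 hβ0))) a
    · refine mul_le_mul_right (ENNReal.ofReal_le_ofReal ?_) W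
      have hmono : (β*t)^n ≤ (β*T)^n :=
        pow_le_pow_left₀ (mul_nonneg hβ0 ht.1) (mul_le_mul_of_nonneg_left ht.2 hβ0) n
      have hfp : (0:ℝ) < n.factorial := by positivity
      exact (div_le_div_iff_of_pos_right hfp).2 hmono 
  have h2 : Tendsto (fun n : ℕ => a * ENNReal.ofReal (Real.exp (β * T))
      + W * ENNReal.ofReal ((β*T)^n / n.factorial)) atTop
      (𝓝 (a * ENNReal.ofReal (Real.exp (β * T)) + W * 0)) := by
    refine tendsto_const_nhds.add (ENNReal.Tendsto.const_mul ?_ (Or.inr hW))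
    have h3 := FloorSemiring.tendsto_pow_div_factorial_atTop (K := ℝ) (β*T)
    have h4 : Tendsto (fun n : ℕ => ENNReal.ofReal ((β*T)^n / n.factorial)) atTop
        (𝓝 (ENNReal.ofReal 0)) := (ENNReal.continuous_ofReal.tendsto 0).comp h3
    simpa using h4
  have h5 := ge_of_tendsto' h2 h1
  simpa using h5


lemma ennnorm_add₃ (a b c : ℝ) :
    (‖a + b + c‖₊ : ℝ≥0∞) ≤ (‖a‖₊ : ℝ≥0∞) + (‖b‖₊ : ℝ≥0∞) + (‖c‖₊ : ℝ≥0∞) := by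
  have h : ‖a + b + c‖₊ ≤ ‖a‖₊ + ‖b‖₊ + ‖c‖₊ :=
    (nnnorm_add_le (a+b) c).trans (add_le_add_left (nnnorm_add_le a b) _)
  exact_mod_cast h

/-- **Uniform bound on bounded solutions of the controlled equation (CE).**
For every `C₀ < ∞` and `M < ∞` there is a constant `C < ∞` such that every
bounded measurable solution `f` of (CE) with data `(x,u)` where
`sup_O |x| ≤ C₀` and `∫_{[0,T]×O} u² ≤ M` satisfies
`sup_{[0,T]×O} |f| ≤ C`. -/
theorem stmt_12
    {d : ℕ} (O : Set (Euc d)) (hOopen : IsOpen O) (hObdd : Bornology.IsBounded O)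
    (T K γ : ℝ) (hT : 0 < T) (hK : 0 < K) (hγ : (d : ℝ) < γ)
    (G : ℝ → ℝ → Euc d → Euc d → ℝ)
    (hGmeas : Measurable fun p : (ℝ × ℝ) × Euc d × Euc d => G p.1.1 p.1.2 p.2.1 p.2.2)
    (hGzero : ∀ t s : ℝ, t ≤ s → ∀ r q : Euc d, G t s r q = 0)
    (hG1 : ∀ t ∈ Icc (0:ℝ) T, ∀ s ∈ Icc (0:ℝ) T, ∀ r ∈ O,
      (∫⁻ q in O, (‖G t s r q‖₊ : ℝ≥0∞)) ≤ ENNReal.ofReal K)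
    (hG2 : ∀ s t : ℝ, 0 ≤ s → s < t → t ≤ T → ∀ r ∈ O, ∀ q ∈ O,
      |G t s r q| ≤ K * (t - s) ^ (-(d : ℝ) / γ))
    (R F : ℝ → Euc d → ℝ → ℝ)
    (hRmeas : Measurable fun p : ℝ × Euc d × ℝ => R p.1 p.2.1 p.2.2)
    (hFmeas : Measurable fun p : ℝ × Euc d × ℝ => F p.1 p.2.1 p.2.2)
    (hLip : ∀ t ∈ Icc (0:ℝ) T, ∀ r ∈ O, ∀ x y : ℝ,
      |R t r x - R t r y| + |F t r x - F t r y| ≤ K * |x - y|)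
    (hGrowth : ∀ t ∈ Icc (0:ℝ) T, ∀ r ∈ O, ∀ x : ℝ,
      |R t r x| + |F t r x| ≤ K * (1 + |x|)) :
    ∀ C₀ M : ℝ, ∃ C : ℝ,
      ∀ (x : Euc d → ℝ) (u : ℝ → Euc d → ℝ) (f : ℝ → Euc d → ℝ),
        Measurable x → (∀ r ∈ O, |x r| ≤ C₀) →
        MemL2 O T u → energy O T u ≤ ENNReal.ofReal M →
        (Measurable fun p : ℝ × Euc d => f p.1 p.2) →
        (∃ B : ℝ, ∀ t ∈ Icc (0:ℝ) T, ∀ r ∈ O, |f t r| ≤ B) →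
        SolvesCE O T G R F x u f →
        ∀ t ∈ Icc (0:ℝ) T, ∀ r ∈ O, |f t r| ≤ C := by
  intro C₀ M
  classical
  -- basic constants
  have hd0 : (0:ℝ) ≤ (d:ℝ) := Nat.cast_nonneg d
  have hγ0 : (0:ℝ) < γ := lt_of_le_of_lt hd0 hγ
  set α : ℝ := (d:ℝ)/γ with hαdef
  have hα0 : 0 ≤ α := div_nonneg hd0 hγ0.le
  have hα1 : α < 1 := (div_lt_one hγ0).2 hγ
  have h1α : (0:ℝ) < 1 - α := by linarith
  set κ : ℝ≥0∞ := ENNReal.ofReal K with hκdef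
  have hκtop : κ ≠ ∞ := ENNReal.ofReal_ne_top
  set c₀ : ℝ≥0∞ := ENNReal.ofReal C₀ with hc₀def
  set M' : ℝ≥0∞ := ENNReal.ofReal M with hM'def
  set T' : ℝ≥0∞ := ENNReal.ofReal T with hT'def
  -- choice of δ
  set P : ℝ := 32*K^4*(max M 0) + 1 with hPdef
  have hP : 0 < P := by positivity
  set η : ℝ := (1-α)/P with hηdef
  have hη : 0 < η := by positivity
  set δ : ℝ := η ^ ((1:ℝ)/(1-α)) with hδdef
  have hδ : 0 < δ := Real.rpow_pos_of_pos hη _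
  have hδpow : δ ^ (1-α) = η := by
    rw [hδdef, ← Real.rpow_mul hη.le, one_div, inv_mul_cancel₀ h1α.ne', Real.rpow_one]
  set δ' : ℝ≥0∞ := ENNReal.ofReal (δ^(-α)) with hδ'def
  set cnear : ℝ≥0∞ := ENNReal.ofReal (δ^(1-α)/(1-α)) with hcneardef
  have habs : 16 * κ^4 * M' * cnear ≤ 2⁻¹ := by
    have h1 : δ^(1-α)/(1-α) = 1/P := by
      rw [hδpow, hηdef]; field_simp
    have h2 : 16 * κ^4 * M' ≤ ENNReal.ofReal (16*K^4*(max M 0)) := by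
      have h3 : M' ≤ ENNReal.ofReal (max M 0) :=
        ENNReal.ofReal_le_ofReal (le_max_left _ _)
      calc 16 * κ^4 * M' ≤ 16 * κ^4 * ENNReal.ofReal (max M 0) := mul_le_mul_right h3 _
        _ = ENNReal.ofReal (16*K^4*(max M 0)) := by
            rw [hκdef, ← ENNReal.ofReal_pow hK.le,
              ENNReal.ofReal_mul (by positivity : (0:ℝ) ≤ 16*K^4),
              ENNReal.ofReal_mul (by norm_num : (0:ℝ) ≤ 16)]
            norm_num
    calc 16 * κ^4 * M' * cnear
        ≤ ENNReal.ofReal (16*K^4*(max M 0)) * ENNReal.ofReal (δ^(1-α)/(1-α)) :=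
          mul_le_mul_left h2 _
      _ = ENNReal.ofReal (16*K^4*(max M 0) * (1/P)) := by
          rw [h1, ← ENNReal.ofReal_mul (by positivity)]
      _ ≤ ENNReal.ofReal (1/2) := by
          refine ENNReal.ofReal_le_ofReal ?_
          rw [mul_one_div, div_le_div_iff₀ hP (by norm_num : (0:ℝ) < 2)]
          nlinarith [le_max_right M 0, mul_nonneg (mul_nonneg (by norm_num : (0:ℝ) ≤ 32) (by positivity : (0:ℝ) ≤ K^4)) (le_max_right M 0)]
      _ = 2⁻¹ := by
          rw [one_div, ENNReal.ofReal_inv_of_pos (by norm_num : (0:ℝ) < 2)]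
          norm_num
  set a₁ : ℝ≥0∞ := 16 * (1 + κ*c₀)^2 with ha₁def
  set b₁ : ℝ≥0∞ := 16 * κ^4 * (T' + M' * δ') with hb₁def
  have ha₁ : a₁ ≠ ∞ := by
    refine ENNReal.mul_ne_top (by norm_num) (ENNReal.pow_ne_top ?_)
    exact ENNReal.add_ne_top.2 ⟨ENNReal.one_ne_top, ENNReal.mul_ne_top hκtop ENNReal.ofReal_ne_top⟩
  have hb₁ : b₁ ≠ ∞ := by
    refine ENNReal.mul_ne_top (ENNReal.mul_ne_top (by norm_num) (ENNReal.pow_ne_top hκtop)) ?_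
    exact ENNReal.add_ne_top.2 ⟨ENNReal.ofReal_ne_top,
      ENNReal.mul_ne_top ENNReal.ofReal_ne_top ENNReal.ofReal_ne_top⟩
  set Cinf : ℝ≥0∞ := (2*a₁) * ENNReal.ofReal (Real.exp ((2*b₁).toReal * T)) with hCinfdef
  have hCinf : Cinf ≠ ∞ :=
    ENNReal.mul_ne_top (ENNReal.mul_ne_top (by norm_num) ha₁) ENNReal.ofReal_ne_top
  refine ⟨(Cinf ^ (1/2:ℝ)).toReal, ?_⟩
  intro x u f hxm hx hu hMen hfm hfB hCE'
  obtain ⟨B, hB⟩ := hfB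
  have hOmeas : MeasurableSet O := hOopen.measurableSet
  -- the sup functions
  set φ : ℝ → ℝ≥0∞ := fun s => ⨆ q ∈ O, (‖f s q‖₊ : ℝ≥0∞) with hφdef
  set ψ : ℝ → ℝ≥0∞ := fun s => 1 + φ s with hψdef
  set Ψ : ℝ → ℝ≥0∞ := fun t => ⨆ s ∈ Icc (0:ℝ) t, (ψ s)^2 with hΨdef
  have hφle : ∀ s : ℝ, ∀ q ∈ O, (‖f s q‖₊:ℝ≥0∞) ≤ φ s := fun s q hq =>
    le_iSup₂ (f := fun q (_ : q ∈ O) => (‖f s q‖₊ : ℝ≥0∞)) q hq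
  have hψΨ : ∀ s : ℝ, 0 ≤ s → ∀ t : ℝ, s ≤ t → ψ s ^ 2 ≤ Ψ t := fun s h0 t hst =>
    le_iSup₂ (f := fun s (_ : s ∈ Icc (0:ℝ) t) => (ψ s)^2) s ⟨h0, hst⟩
  have hΨmono : Monotone Ψ := fun t₁ t₂ h =>
    biSup_mono fun s hs => ⟨hs.1, hs.2.trans h⟩
  have hΨmeas : Measurable Ψ := hΨmono.measurable
  have hφB : ∀ s ∈ Icc (0:ℝ) T, φ s ≤ ENNReal.ofReal B := by
    intro s hs
    refine iSup₂_le fun q hq => ?_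
    rw [← enorm_eq_nnnorm, Real.enorm_eq_ofReal_abs]
    exact ENNReal.ofReal_le_ofReal (hB s hs q hq)
  set W : ℝ≥0∞ := (1 + ENNReal.ofReal B)^2 with hWdef
  have hWne : W ≠ ∞ := ENNReal.pow_ne_top
    (ENNReal.add_ne_top.2 ⟨ENNReal.one_ne_top, ENNReal.ofReal_ne_top⟩)
  have hψfin : ∀ s ∈ Icc (0:ℝ) T, ψ s ≠ ∞ := by
    intro s hs
    have : ψ s ≤ 1 + ENNReal.ofReal B := add_le_add le_rfl (hφB s hs)
    exact (this.trans_lt (lt_top_iff_ne_top.2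
      (ENNReal.add_ne_top.2 ⟨ENNReal.one_ne_top, ENNReal.ofReal_ne_top⟩))).ne
  have hΨW : ∀ t ∈ Icc (0:ℝ) T, Ψ t ≤ W := by
    intro t ht
    refine iSup₂_le fun s hs => ?_
    have h1 : ψ s ≤ 1 + ENNReal.ofReal B :=
      add_le_add le_rfl (hφB s ⟨hs.1, hs.2.trans ht.2⟩)
    exact pow_le_pow_left' h1 2
  -- measurability helpers
  have hGm : ∀ t₀ : ℝ, ∀ r₀ : Euc d,
      Measurable (fun p : ℝ × Euc d => (‖G t₀ p.1 r₀ p.2‖₊ : ℝ≥0∞)) := by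
    intro t₀ r₀
    have h1 : Measurable (fun p : ℝ × Euc d => ((t₀, p.1), (r₀, p.2))) :=
      (measurable_const.prodMk measurable_fst).prodMk
        (measurable_const.prodMk measurable_snd)
    exact (hGmeas.comp h1).enorm
  have hFm : Measurable (fun p : ℝ × Euc d => (‖F p.1 p.2 (f p.1 p.2)‖₊ : ℝ≥0∞)) := by
    have h1 : Measurable (fun p : ℝ × Euc d => (p.1, (p.2, f p.1 p.2))) :=
      measurable_fst.prodMk (measurable_snd.prodMk hfm)
    exact (hFmeas.comp h1).enorm
  -- growth bound in ℝ≥0∞ form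
  have hRFb : ∀ s ∈ Icc (0:ℝ) T, ∀ q ∈ O,
      (‖R s q (f s q)‖₊ : ℝ≥0∞) ≤ κ * ψ s ∧ (‖F s q (f s q)‖₊ : ℝ≥0∞) ≤ κ * ψ s := by
    intro s hs q hq
    have hg := hGrowth s hs q hq (f s q)
    have habsR : |R s q (f s q)| ≤ K * (1 + |f s q|) :=
      le_trans (le_add_of_nonneg_right (abs_nonneg _)) hg
    have habsF : |F s q (f s q)| ≤ K * (1 + |f s q|) :=
      le_trans (le_add_of_nonneg_left (abs_nonneg _)) hg
    have hconv : ENNReal.ofReal (K * (1 + |f s q|)) ≤ κ * ψ s := by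
      rw [ENNReal.ofReal_mul hK.le,
        ENNReal.ofReal_add zero_le_one (abs_nonneg _), ENNReal.ofReal_one]
      refine mul_le_mul_right (add_le_add le_rfl ?_) κ
      rw [← Real.enorm_eq_ofReal_abs]
      exact hφle s q hq
    constructor
    · rw [← enorm_eq_nnnorm, Real.enorm_eq_ofReal_abs]
      exact (ENNReal.ofReal_le_ofReal habsR).trans hconv
    · rw [← enorm_eq_nnnorm, Real.enorm_eq_ofReal_abs]
      exact (ENNReal.ofReal_le_ofReal habsF).trans hconv
  -- the key pointwise estimate
  have key1 : ∀ t ∈ Icc (0:ℝ) T,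
      ψ t ^ 2 ≤ a₁ + b₁ * (∫⁻ s in Icc (0:ℝ) t, Ψ s) + 2⁻¹ * Ψ t := by
    intro t ht
    set Jt : ℝ≥0∞ := ∫⁻ s in Icc (0:ℝ) t, Ψ s with hJtdef
    set SQ : ℝ≥0∞ := (κ^4 * (δ' * Jt + cnear * Ψ t)) ^ (1/2:ℝ) * M' ^ (1/2:ℝ) with hSQdef
    have claimA : ∀ r ∈ O, (‖f t r‖₊:ℝ≥0∞) ≤
        κ*c₀ + κ^2 * (∫⁻ s in Icc (0:ℝ) t, ψ s) + SQ := by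
      intro r hr
      have hfr := hCE' t ht r hr
      have tri : (‖f t r‖₊:ℝ≥0∞) ≤
          (‖∫ q in O, G t 0 r q * x q‖₊ : ℝ≥0∞)
          + (‖∫ s in Icc (0:ℝ) t, ∫ q in O, G t s r q * R s q (f s q)‖₊ : ℝ≥0∞)
          + (‖∫ s in Icc (0:ℝ) t, ∫ q in O, G t s r q * F s q (f s q) * u s q‖₊ : ℝ≥0∞) := by
        rw [hfr]
        exact ennnorm_add₃ _ _ _
      refine tri.trans (add_le_add (add_le_add ?term0 ?termR) ?termF)
      case term0 =>
        refine (enorm_integral_le_lintegral_enorm _).trans ?_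
        calc ∫⁻ q in O, (‖G t 0 r q * x q‖₊:ℝ≥0∞)
            ≤ ∫⁻ q in O, (‖G t 0 r q‖₊:ℝ≥0∞) * c₀ := by
              refine setLIntegral_mono' hOmeas fun q hq => ?_
              rw [nnnorm_mul, ENNReal.coe_mul]
              refine mul_le_mul_right ?_ _
              rw [← enorm_eq_nnnorm, Real.enorm_eq_ofReal_abs]
              exact ENNReal.ofReal_le_ofReal (hx q hq)
          _ = (∫⁻ q in O, (‖G t 0 r q‖₊:ℝ≥0∞)) * c₀ :=
              lintegral_mul_const' c₀ _ ENNReal.ofReal_ne_top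
          _ ≤ κ * c₀ := mul_le_mul_left (hG1 t ht 0 ⟨le_rfl, hT.le⟩ r hr) c₀
      case termR =>
        refine (enorm_integral_le_lintegral_enorm _).trans ?_
        have hinner : ∀ s ∈ Icc (0:ℝ) t,
            (‖∫ q in O, G t s r q * R s q (f s q)‖₊:ℝ≥0∞) ≤ κ^2 * ψ s := by
          intro s hs
          have hsT : s ∈ Icc (0:ℝ) T := ⟨hs.1, hs.2.trans ht.2⟩
          refine (enorm_integral_le_lintegral_enorm _).trans ?_
          calc ∫⁻ q in O, (‖G t s r q * R s q (f s q)‖₊:ℝ≥0∞)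
              ≤ ∫⁻ q in O, (‖G t s r q‖₊:ℝ≥0∞) * (κ * ψ s) := by
                refine setLIntegral_mono' hOmeas fun q hq => ?_
                rw [nnnorm_mul, ENNReal.coe_mul]
                exact mul_le_mul_right ((hRFb s hsT q hq).1) _
            _ = (∫⁻ q in O, (‖G t s r q‖₊:ℝ≥0∞)) * (κ * ψ s) :=
                lintegral_mul_const' _ _ (ENNReal.mul_ne_top hκtop (hψfin s hsT))
            _ ≤ κ * (κ * ψ s) := mul_le_mul_left (hG1 t ht s hsT r hr) _
            _ = κ^2 * ψ s := by ring
        calc ∫⁻ s in Icc (0:ℝ) t, (‖∫ q in O, G t s r q * R s q (f s q)‖₊:ℝ≥0∞)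
            ≤ ∫⁻ s in Icc (0:ℝ) t, κ^2 * ψ s := setLIntegral_mono' measurableSet_Icc hinner
          _ = κ^2 * ∫⁻ s in Icc (0:ℝ) t, ψ s :=
              lintegral_const_mul' _ _ (ENNReal.pow_ne_top hκtop)
      case termF =>
        set μt := (volume : Measure ℝ).restrict (Icc (0:ℝ) t) with hμtdef
        set ν := (volume : Measure (Euc d)).restrict O with hνdef
        set g₁ : ℝ × Euc d → ℝ≥0∞ :=
          fun p => (‖G t p.1 r p.2‖₊ : ℝ≥0∞) * (‖F p.1 p.2 (f p.1 p.2)‖₊ : ℝ≥0∞) with hg₁def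
        set g₂ : ℝ × Euc d → ℝ≥0∞ := fun p => (‖u p.1 p.2‖₊ : ℝ≥0∞) with hg₂def
        have hg₁m : Measurable g₁ := (hGm t r).mul hFm
        have hg₂m : AEMeasurable g₂ (μt.prod ν) := by
          have h2 := hu.1
          have h3 : (μt.prod ν) ≤ ((volume : Measure ℝ).restrict (Icc (0:ℝ) T)).prod ν := by
            rw [hμtdef, hνdef, Measure.prod_restrict, Measure.prod_restrict]
            exact Measure.restrict_mono
              (Set.prod_mono (Icc_subset_Icc_right ht.2) subset_rfl) le_rfl
          exact (h2.mono_measure h3).enorm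
        refine (enorm_integral_le_lintegral_enorm _).trans ?_
        have step1 : (∫⁻ s in Icc (0:ℝ) t,
              (‖∫ q in O, G t s r q * F s q (f s q) * u s q‖₊:ℝ≥0∞))
            ≤ ∫⁻ s in Icc (0:ℝ) t, ∫⁻ q in O, g₁ (s, q) * g₂ (s, q) := by
          refine lintegral_mono fun s => ?_
          refine (enorm_integral_le_lintegral_enorm _).trans (le_of_eq ?_)
          refine lintegral_congr fun q => ?_
          rw [hg₁def, hg₂def]
          simp only [enorm_eq_nnnorm, nnnorm_mul, ENNReal.coe_mul]
        refine step1.trans ?_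
        have huncurry : AEMeasurable
            (Function.uncurry fun s q => g₁ (s,q) * g₂ (s,q)) (μt.prod ν) := by
          have he : (Function.uncurry fun s q => g₁ (s,q) * g₂ (s,q))
              = fun p => g₁ p * g₂ p := by
            funext p; simp [Function.uncurry]
          rw [he]
          exact hg₁m.aemeasurable.mul hg₂m
        have hiter : (∫⁻ s in Icc (0:ℝ) t, ∫⁻ q in O, g₁ (s,q) * g₂ (s,q))
            = ∫⁻ p, g₁ p * g₂ p ∂(μt.prod ν) := by
          rw [lintegral_lintegral huncurry]
        rw [hiter]
        have hfac2 : ∫⁻ p, g₂ p ^ 2 ∂(μt.prod ν) ≤ M' := by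
          have hg₂sq : AEMeasurable
              (Function.uncurry fun s q => g₂ (s,q)^2) (μt.prod ν) := by
            have he : (Function.uncurry fun s q => g₂ (s,q)^2) = fun p => g₂ p ^2 := by
              funext p; simp [Function.uncurry]
            rw [he]; exact hg₂m.pow_const 2
          have h6 : (∫⁻ s in Icc (0:ℝ) t, ∫⁻ q in O, g₂ (s,q)^2)
              = ∫⁻ p, g₂ p ^2 ∂(μt.prod ν) := by
            rw [lintegral_lintegral hg₂sq]
          rw [← h6]
          refine le_trans (lintegral_mono_set (Icc_subset_Icc_right ht.2)) hMen
        have hΛ : (∫⁻ s in Icc (0:ℝ) t, ψ s^2 * ENNReal.ofReal ((t-s)^(-α)))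
            ≤ δ' * Jt + cnear * Ψ t := by
          have hsub : Icc (0:ℝ) t ⊆ Icc 0 (t-δ) ∪ Icc (max (t-δ) 0) t := by
            intro s hs
            rcases le_or_gt s (t-δ) with h | h
            · exact Or.inl ⟨hs.1, h⟩
            · exact Or.inr ⟨max_le h.le hs.1, hs.2⟩
          refine le_trans (lintegral_mono_set hsub) ?_
          refine (lintegral_union_le _ _ _).trans (add_le_add ?_ ?_)
          · calc ∫⁻ s in Icc (0:ℝ) (t-δ), ψ s^2 * ENNReal.ofReal ((t-s)^(-α))
                ≤ ∫⁻ s in Icc (0:ℝ) (t-δ), Ψ s * δ' := by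
                  refine setLIntegral_mono' measurableSet_Icc fun s hs => ?_
                  refine mul_le_mul' (hψΨ s hs.1 s le_rfl) ?_
                  rw [hδ'def]
                  exact ENNReal.ofReal_le_ofReal
                    (Real.rpow_le_rpow_of_nonpos hδ (by linarith [hs.2]) (neg_nonpos.2 hα0))
              _ = (∫⁻ s in Icc (0:ℝ) (t-δ), Ψ s) * δ' :=
                  lintegral_mul_const' _ _ ENNReal.ofReal_ne_top
              _ ≤ Jt * δ' := mul_le_mul_left
                  (lintegral_mono_set (Icc_subset_Icc_right (by linarith))) δ'
              _ = δ' * Jt := mul_comm _ _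
          · have h0a' : (0:ℝ) ≤ max (t-δ) 0 := le_max_right _ _
            have ha't : max (t-δ) 0 ≤ t := max_le (by linarith) ht.1
            have hΨtne : Ψ t ≠ ∞ := ((hΨW t ht).trans_lt (lt_top_iff_ne_top.2 hWne)).ne
            calc ∫⁻ s in Icc (max (t-δ) 0) t, ψ s^2 * ENNReal.ofReal ((t-s)^(-α))
                ≤ ∫⁻ s in Icc (max (t-δ) 0) t, Ψ t * ENNReal.ofReal ((t-s)^(-α)) := by
                  refine setLIntegral_mono' measurableSet_Icc fun s hs => ?_
                  exact mul_le_mul_left (hψΨ s (h0a'.trans hs.1) t hs.2) _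
              _ = Ψ t * ∫⁻ s in Icc (max (t-δ) 0) t, ENNReal.ofReal ((t-s)^(-α)) :=
                  lintegral_const_mul' _ _ hΨtne
              _ ≤ Ψ t * ENNReal.ofReal ((t - max (t-δ) 0)^(1-α)/(1-α)) :=
                  mul_le_mul_right (kernel_lintegral_le hα0 hα1 h0a' ha't) _
              _ ≤ Ψ t * cnear := by
                  refine mul_le_mul_right ?_ _
                  rw [hcneardef]
                  refine ENNReal.ofReal_le_ofReal ?_
                  have h9 : (t - max (t-δ) 0)^(1-α) ≤ δ^(1-α) :=
                    Real.rpow_le_rpow (by linarith [ha't])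
                      (by linarith [le_max_left (t-δ) 0]) h1α.le
                  exact (div_le_div_iff_of_pos_right h1α).2 h9
              _ = cnear * Ψ t := mul_comm _ _
        have hfac1 : ∫⁻ p, g₁ p ^ 2 ∂(μt.prod ν) ≤ κ^4 * (δ' * Jt + cnear * Ψ t) := by
          have hg₁sq : AEMeasurable
              (Function.uncurry fun s q => g₁ (s,q)^2) (μt.prod ν) := by
            have he : (Function.uncurry fun s q => g₁ (s,q)^2) = fun p => g₁ p ^2 := by
              funext p; simp [Function.uncurry]
            rw [he]; exact (hg₁m.pow_const 2).aemeasurable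
          have h6 : (∫⁻ s in Icc (0:ℝ) t, ∫⁻ q in O, g₁ (s,q)^2)
              = ∫⁻ p, g₁ p ^2 ∂(μt.prod ν) := by
            rw [lintegral_lintegral hg₁sq]
          rw [← h6]
          have hinner : ∀ s ∈ Icc (0:ℝ) t,
              (∫⁻ q in O, g₁ (s,q)^2) ≤ (κ^4 * ψ s ^2) * ENNReal.ofReal ((t-s)^(-α)) := by
            intro s hs
            have hsT : s ∈ Icc (0:ℝ) T := ⟨hs.1, hs.2.trans ht.2⟩
            have hker : ∀ q ∈ O,
                (‖G t s r q‖₊ : ℝ≥0∞) ≤ ENNReal.ofReal (K * (t-s)^(-α)) := by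
              intro q hq
              rcases eq_or_lt_of_le hs.2 with heq | hlt
              · rw [hGzero t s heq.ge r q]
                simp
              · rw [← enorm_eq_nnnorm, Real.enorm_eq_ofReal_abs]
                refine ENNReal.ofReal_le_ofReal ?_
                have h8 := hG2 s t hs.1 hlt ht.2 r hr q hq
                rwa [neg_div] at h8
            calc (∫⁻ q in O, g₁ (s,q)^2)
                ≤ ∫⁻ q in O, ENNReal.ofReal (K * (t-s)^(-α)) *
                    ((‖G t s r q‖₊:ℝ≥0∞) * (κ * ψ s)^2) := by
                  refine setLIntegral_mono' hOmeas fun q hq => ?_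
                  rw [hg₁def]
                  calc ((‖G t s r q‖₊:ℝ≥0∞) * (‖F s q (f s q)‖₊:ℝ≥0∞))^2
                      = ((‖G t s r q‖₊:ℝ≥0∞) * (‖G t s r q‖₊:ℝ≥0∞))
                          * (‖F s q (f s q)‖₊:ℝ≥0∞)^2 := by ring
                    _ ≤ (ENNReal.ofReal (K * (t-s)^(-α)) * (‖G t s r q‖₊:ℝ≥0∞))
                          * (κ * ψ s)^2 := by
                        refine mul_le_mul' (mul_le_mul' (hker q hq) le_rfl) ?_
                        exact pow_le_pow_left' (hRFb s hsT q hq).2 2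
                    _ = ENNReal.ofReal (K * (t-s)^(-α)) *
                          ((‖G t s r q‖₊:ℝ≥0∞) * (κ * ψ s)^2) := by ring
              _ = ENNReal.ofReal (K * (t-s)^(-α)) *
                    ((∫⁻ q in O, (‖G t s r q‖₊:ℝ≥0∞)) * (κ * ψ s)^2) := by
                  rw [lintegral_const_mul' _ _ ENNReal.ofReal_ne_top,
                    lintegral_mul_const' _ _
                      (ENNReal.pow_ne_top (ENNReal.mul_ne_top hκtop (hψfin s hsT)))]
              _ ≤ ENNReal.ofReal (K * (t-s)^(-α)) * (κ * (κ * ψ s)^2) :=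
                  mul_le_mul_right (mul_le_mul_left (hG1 t ht s hsT r hr) _) _
              _ = (κ^4 * ψ s^2) * ENNReal.ofReal ((t-s)^(-α)) := by
                  rw [ENNReal.ofReal_mul hK.le]
                  ring
          calc (∫⁻ s in Icc (0:ℝ) t, ∫⁻ q in O, g₁ (s,q)^2)
              ≤ ∫⁻ s in Icc (0:ℝ) t, (κ^4 * ψ s^2) * ENNReal.ofReal ((t-s)^(-α)) :=
                setLIntegral_mono' measurableSet_Icc hinner
            _ = κ^4 * ∫⁻ s in Icc (0:ℝ) t, ψ s^2 * ENNReal.ofReal ((t-s)^(-α)) := by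
                rw [← lintegral_const_mul' _ _ (ENNReal.pow_ne_top hκtop)]
                exact lintegral_congr fun s => by ring
            _ ≤ κ^4 * (δ' * Jt + cnear * Ψ t) := mul_le_mul_right hΛ _
        refine (cs_lintegral (μt.prod ν) hg₁m.aemeasurable hg₂m).trans ?_
        exact mul_le_mul' (ENNReal.rpow_le_rpow hfac1 (by norm_num))
          (ENNReal.rpow_le_rpow hfac2 (by norm_num))
    -- from claimA to the squared bound
    have hψt : ψ t ≤ (1 + κ*c₀) + κ^2 * (∫⁻ s in Icc (0:ℝ) t, ψ s) + SQ := by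
      have h1 : φ t ≤ κ*c₀ + κ^2 * (∫⁻ s in Icc (0:ℝ) t, ψ s) + SQ := iSup₂_le claimA
      calc ψ t = 1 + φ t := rfl
        _ ≤ 1 + (κ*c₀ + κ^2 * (∫⁻ s in Icc (0:ℝ) t, ψ s) + SQ) := add_le_add le_rfl h1
        _ = (1 + κ*c₀) + κ^2 * (∫⁻ s in Icc (0:ℝ) t, ψ s) + SQ := by ring
    have hCSψ : (∫⁻ s in Icc (0:ℝ) t, ψ s)^2 ≤ T' * Jt := by
      have h1 : (∫⁻ s in Icc (0:ℝ) t, ψ s) ≤ ∫⁻ s in Icc (0:ℝ) t, (Ψ s) ^ (1/2:ℝ) := by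
        refine setLIntegral_mono' measurableSet_Icc fun s hs => ?_
        calc ψ s = (ψ s ^ 2) ^ (1/2:ℝ) := self_le_sq_rpow_half _
          _ ≤ (Ψ s) ^ (1/2:ℝ) :=
              ENNReal.rpow_le_rpow (hψΨ s hs.1 s le_rfl) (by norm_num)
      have h3 : (∫⁻ s in Icc (0:ℝ) t, (Ψ s) ^ (1/2:ℝ)) ≤
          ((∫⁻ s in Icc (0:ℝ) t, ((Ψ s)^(1/2:ℝ))^2) ^ (1/2:ℝ)) *
          ((∫⁻ s in Icc (0:ℝ) t, (1:ℝ≥0∞)^2) ^ (1/2:ℝ)) := by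
        have h4 := cs_lintegral ((volume : Measure ℝ).restrict (Icc (0:ℝ) t))
          (f := fun s => (Ψ s)^(1/2:ℝ)) (g := fun _ => (1:ℝ≥0∞))
          ((ENNReal.continuous_rpow_const.measurable.comp hΨmeas).aemeasurable)
          aemeasurable_const
        simpa using h4
      have h4 : (∫⁻ s in Icc (0:ℝ) t, ((Ψ s)^(1/2:ℝ))^2) = Jt :=
        lintegral_congr fun s => sq_rpow_half _
      have h5 : (∫⁻ s in Icc (0:ℝ) t, (1:ℝ≥0∞)^2) ≤ T' := by
        simp only [one_pow, lintegral_one, Measure.restrict_apply_univ, Real.volume_Icc,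
          sub_zero]
        exact ENNReal.ofReal_le_ofReal ht.2
      calc (∫⁻ s in Icc (0:ℝ) t, ψ s)^2
          ≤ ((Jt)^(1/2:ℝ) * ((∫⁻ s in Icc (0:ℝ) t, (1:ℝ≥0∞)^2)^(1/2:ℝ)))^2 := by
            refine pow_le_pow_left' ((h1.trans h3).trans (le_of_eq ?_)) 2
            rw [h4]
        _ = Jt * (∫⁻ s in Icc (0:ℝ) t, (1:ℝ≥0∞)^2) := by
            rw [mul_pow, sq_rpow_half, sq_rpow_half]
        _ ≤ Jt * T' := mul_le_mul_right h5 _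
        _ = T' * Jt := mul_comm _ _
    have hSQ2 : SQ^2 = κ^4 * (δ' * Jt + cnear * Ψ t) * M' := by
      rw [hSQdef, mul_pow, sq_rpow_half, sq_rpow_half]
    calc ψ t ^2
        ≤ 16*(1+κ*c₀)^2 + 16*(κ^2 * (∫⁻ s in Icc (0:ℝ) t, ψ s))^2 + 16*SQ^2 :=
          (pow_le_pow_left' hψt 2).trans (sq_add3_le _ _ _)
      _ ≤ a₁ + 16*(κ^4 * (T' * Jt)) + 16*(κ^4*(δ'*Jt + cnear*Ψ t)*M') := by
          refine add_le_add (add_le_add (le_of_eq rfl) ?_) (le_of_eq ?_)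
          · rw [mul_pow]
            calc 16 * ((κ^2)^2 * (∫⁻ s in Icc (0:ℝ) t, ψ s)^2)
                ≤ 16 * ((κ^2)^2 * (T' * Jt)) := by
                  exact mul_le_mul_right (mul_le_mul_right hCSψ _) _
              _ = 16*(κ^4 * (T' * Jt)) := by ring
          · rw [hSQ2]
      _ = (a₁ + (16*κ^4*T') * Jt + (16*κ^4*M'*δ') * Jt) + (16*κ^4*M'*cnear) * Ψ t := by
          ring
      _ ≤ (a₁ + b₁ * Jt) + 2⁻¹ * Ψ t := by
          refine add_le_add (le_of_eq ?_) (mul_le_mul_left habs _)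
          rw [hb₁def]; ring
      _ = a₁ + b₁ * Jt + 2⁻¹ * Ψ t := by ring
  -- the integral recursion for Ψ and Gronwall
  have hrecΨ : ∀ t ∈ Icc (0:ℝ) T, Ψ t ≤ 2*a₁ + (2*b₁) * ∫⁻ s in Icc (0:ℝ) t, Ψ s := by
    intro t ht
    have h1 : Ψ t ≤ (a₁ + b₁ * ∫⁻ s in Icc (0:ℝ) t, Ψ s) + 2⁻¹ * Ψ t := by
      refine iSup₂_le fun s hs => ?_
      refine (key1 s ⟨hs.1, hs.2.trans ht.2⟩).trans ?_
      exact add_le_add (add_le_add le_rfl (mul_le_mul_right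
        (lintegral_mono_set (Icc_subset_Icc_right hs.2)) b₁))
        (mul_le_mul_right (hΨmono hs.2) _)
    have hfin : Ψ t ≠ ∞ := ((hΨW t ht).trans_lt (lt_top_iff_ne_top.2 hWne)).ne
    have h2 : Ψ t / 2 ≤ a₁ + b₁ * ∫⁻ s in Icc (0:ℝ) t, Ψ s := by
      rw [← ENNReal.sub_half hfin]
      refine tsub_le_iff_right.2 ?_
      calc Ψ t ≤ (a₁ + b₁ * ∫⁻ s in Icc (0:ℝ) t, Ψ s) + 2⁻¹ * Ψ t := h1
        _ = (a₁ + b₁ * ∫⁻ s in Icc (0:ℝ) t, Ψ s) + Ψ t / 2 := by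
            rw [div_eq_mul_inv, mul_comm (Ψ t) 2⁻¹]
    calc Ψ t = 2 * (Ψ t / 2) :=
          (ENNReal.mul_div_cancel' (by norm_num) (by norm_num)).symm
      _ ≤ 2 * (a₁ + b₁ * ∫⁻ s in Icc (0:ℝ) t, Ψ s) := mul_le_mul_right h2 2
      _ = 2*a₁ + (2*b₁) * ∫⁻ s in Icc (0:ℝ) t, Ψ s := by ring
  have hgron := gronwall (a := 2*a₁) (b := 2*b₁) (W := W)
    (ENNReal.mul_ne_top (by norm_num) ha₁) (ENNReal.mul_ne_top (by norm_num) hb₁)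
    hWne hT.le hΨW hrecΨ
  intro t ht r hr
  have h1 : (‖f t r‖₊:ℝ≥0∞)^2 ≤ Ψ t := by
    refine le_trans (pow_le_pow_left' ?_ 2) (hψΨ t ht.1 t le_rfl)
    exact le_trans (hφle t r hr) le_add_self
  have h2 : (‖f t r‖₊:ℝ≥0∞)^2 ≤ Cinf := h1.trans (hgron t ht)
  have h3 : (‖f t r‖₊:ℝ≥0∞) ≤ Cinf ^ (1/2:ℝ) := by
    calc (‖f t r‖₊:ℝ≥0∞) = ((‖f t r‖₊:ℝ≥0∞)^2) ^ (1/2:ℝ) := self_le_sq_rpow_half _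
      _ ≤ Cinf ^ (1/2:ℝ) := ENNReal.rpow_le_rpow h2 (by norm_num)
  rw [← enorm_eq_nnnorm, Real.enorm_eq_ofReal_abs] at h3
  exact (ENNReal.ofReal_le_iff_le_toReal
    (ENNReal.rpow_ne_top_of_nonneg (by norm_num) hCinf)).1 h3

end
end
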